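/- arXiv:2301.03683 — 9 statements merged into one kernel-verified Lean document; each statement's English description precedes it below -/
import Mathlib

section
/- Let (g,γ) be a construction pair on an abelian group (X,+), and equip ℤ × X with the multiplication (i,x)·(j,y) = (i+j, g^{−j}(x)+y+∑_{k∈I(i+j,−j)} g^{−k}(γ(x,y))). For integers i,j,k and x,y,z ∈ X, set u = ∑_{t∈I(i+j,i+j+k)} g^{−t}(γ(x,y)) + ∑_{t∈I(i+k,i+j+k)} g^{−t}(γ(x,z)) + ∑_{t∈I(j+k,i+j+k)} g^{−t}(γ(y,z)). Then ((i,x)·((j,y)·(k,z)))·(0,u) = ((i,x)·(j,y))·(k,z); that is, (0,u) is the loop associator [(i,x),(j,y),(k,z)]. -/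
/-- The interval `I(i,j)` of integers: `∅` if `i = j`, `{i,…,j-1}` if `i < j`,
and `{j,…,i-1}` if `j < i`. -/
noncomputable def I (i j : ℤ) : Finset ℤ := Finset.Ico (min i j) (max i j)

/-- A construction pair `(g, γ)` on an abelian group `(X, +)`. -/
structure IsConstructionPair {X : Type*} [AddCommGroup X]
    (g : Equiv.Perm X) (γ : X → X → X) : Prop where
  symm : ∀ x y, γ x y = γ y x
  alt : ∀ x, γ x x = 0
  add_left : ∀ x y z, γ (x + y) z = γ x z + γ y z
  add_right : ∀ x y z, γ x (y + z) = γ x y + γ x z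
  c1 : ∀ x y, g⁻¹ (g x + g y)
      = x + y + γ x y + g⁻¹ (γ x y) + g⁻¹ (g⁻¹ (γ x y))
  c2 : ∀ x y z, γ (γ x y) z = 0
  c3 : ∀ x y, g⁻¹ (γ x y) = γ (g x) y

/-- The multiplication of `ℤ ⋉_{(g,γ)} X` on `ℤ × X`:
`(i,x)·(j,y) = (i+j, g^{-j}(x) + y + ∑_{k ∈ I(i+j,-j)} g^{-k}(γ(x,y)))`. -/
noncomputable def cmul {X : Type*} [AddCommGroup X] (g : Equiv.Perm X) (γ : X → X → X) :
    ℤ × X → ℤ × X → ℤ × X :=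
  fun u v =>
    (u.1 + v.1,
      (g ^ (-v.1)) u.2 + v.2 + ∑ k ∈ I (u.1 + v.1) (-v.1), (g ^ (-k)) (γ u.2 v.2))


theorem Equiv.Perm.apply_inv_self {α : Type*} (f : Equiv.Perm α) (x : α) : f (f⁻¹ x) = x :=
  f.apply_symm_apply x

theorem Equiv.Perm.inv_apply_self {α : Type*} (f : Equiv.Perm α) (x : α) : f⁻¹ (f x) = x :=
  f.symm_apply_apply x

namespace CPaux

variable {X : Type*} [AddCommGroup X] {g : Equiv.Perm X} {γ : X → X → X}

/-- signed-free interval sum -/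
noncomputable def Sm (g : Equiv.Perm X) (p q : ℤ) (c : X) : X := ∑ t ∈ I p q, (g ^ (-t)) c

lemma Sm_symm (p q : ℤ) (c : X) : Sm g p q c = Sm g q p c := by
  unfold Sm I; rw [min_comm, max_comm]

lemma zpow_congr {a b : ℤ} (hab : a = b) (v : X) : (g ^ a) v = (g ^ b) v := by rw [hab]

lemma zpow_succ_apply (n : ℤ) (v : X) : (g ^ (n+1)) v = g ((g ^ n) v) := by
  rw [show n + 1 = 1 + n by ring, zpow_add, zpow_one, Equiv.Perm.mul_apply]

lemma zpow_pred_apply (n : ℤ) (v : X) : (g ^ (n-1)) v = g⁻¹ ((g ^ n) v) := by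
  rw [show n - 1 = -1 + n by ring, zpow_add, zpow_neg_one, Equiv.Perm.mul_apply]

lemma zpow_zpow_apply (m n : ℤ) (v : X) : (g ^ m) ((g ^ n) v) = (g ^ (m + n)) v := by
  rw [zpow_add, Equiv.Perm.mul_apply]

lemma gamma_zero_left (h : IsConstructionPair g γ) (y : X) : γ 0 y = 0 := by
  have h0 := h.add_left 0 0 y
  rw [add_zero] at h0
  have h1 : γ 0 y + 0 = γ 0 y + γ 0 y := by rw [add_zero]; exact h0
  exact (add_left_cancel h1).symm

lemma gamma_zero_right (h : IsConstructionPair g γ) (x : X) : γ x 0 = 0 := by rw [h.symm]; exact gamma_zero_left h x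

lemma gamma_two (h : IsConstructionPair g γ) (x y : X) : γ x y + γ x y = 0 := by
  have h0 := h.alt (x + y)
  rw [h.add_left, h.add_right, h.add_right, h.alt, h.alt, h.symm y x] at h0
  simpa using h0

lemma ginv_zero (h : IsConstructionPair g γ) : g⁻¹ (0 : X) = 0 := by
  have h0 := h.c3 0 0
  rwa [gamma_zero_left h, gamma_zero_right h] at h0

lemma g_zero (h : IsConstructionPair g γ) : g (0 : X) = 0 := by
  calc g (0:X) = g (g⁻¹ 0) := by rw [ginv_zero h]
  _ = 0 := Equiv.Perm.apply_inv_self g 0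

lemma gamma_ginv (h : IsConstructionPair g γ) (x y : X) : γ (g⁻¹ x) y = g (γ x y) := by
  have h0 := h.c3 (g⁻¹ x) y
  rw [Equiv.Perm.apply_inv_self] at h0
  rw [← h0, Equiv.Perm.apply_inv_self]

lemma gamma_g (h : IsConstructionPair g γ) (x y : X) : γ (g x) y = g⁻¹ (γ x y) := (h.c3 x y).symm

lemma zpow_zero_apply (h : IsConstructionPair g γ) (n : ℤ) : (g ^ n) (0 : X) = 0 := by
  induction n using Int.induction_on with
  | zero => simp
  | succ i ih => rw [zpow_succ_apply, ih, g_zero h]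
  | pred i ih => rw [show (-(i:ℤ) - 1) = (-(i:ℤ)) - 1 by ring, zpow_pred_apply, ih, ginv_zero h]

lemma gamma_zpow (h : IsConstructionPair g γ) (n : ℤ) (x y : X) : γ ((g ^ n) x) y = (g ^ (-n)) (γ x y) := by
  induction n using Int.induction_on with
  | zero => simp
  | succ i ih =>
      rw [zpow_succ_apply, gamma_g h, ih, ← zpow_pred_apply]
      exact zpow_congr (by ring) _
  | pred i ih =>
      rw [show (-(i:ℤ) - 1) = (-(i:ℤ)) - 1 by ring, zpow_pred_apply, gamma_ginv h, ih,
        ← zpow_succ_apply]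
      exact zpow_congr (by ring) _

lemma gamma_zpow_right (h : IsConstructionPair g γ) (n : ℤ) (x y : X) : γ x ((g ^ n) y) = (g ^ (-n)) (γ x y) := by
  rw [h.symm, gamma_zpow h, h.symm]

lemma c1' (h : IsConstructionPair g γ) (a b : X) :
    g⁻¹ (a + b) = g⁻¹ a + g⁻¹ b + g (g (γ a b)) + g (γ a b) + γ a b := by
  have h0 := h.c1 (g⁻¹ a) (g⁻¹ b)
  rw [Equiv.Perm.apply_inv_self, Equiv.Perm.apply_inv_self] at h0
  have h1 : γ (g⁻¹ a) (g⁻¹ b) = g (g (γ a b)) := by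
    rw [gamma_ginv h, h.symm a, gamma_ginv h, h.symm b]
  rw [h1, Equiv.Perm.inv_apply_self, Equiv.Perm.inv_apply_self] at h0
  exact h0

lemma ginv_add_orth (h : IsConstructionPair g γ) {a b : X} (hab : γ a b = 0) : g⁻¹ (a + b) = g⁻¹ a + g⁻¹ b := by
  rw [c1' h, hab, g_zero h, g_zero h]
  abel

lemma g_add_orth (h : IsConstructionPair g γ) {a b : X} (hab : γ a b = 0) : g (a + b) = g a + g b := by
  have h0 : g⁻¹ (g a + g b) = a + b := by
    rw [h.c1, hab, ginv_zero h, ginv_zero h]; abel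
  calc g (a + b) = g (g⁻¹ (g a + g b)) := by rw [h0]
  _ = g a + g b := Equiv.Perm.apply_inv_self g _

lemma zpow_add_orth (h : IsConstructionPair g γ) (n : ℤ) {a b : X} (hab : γ a b = 0) :
    (g ^ n) (a + b) = (g ^ n) a + (g ^ n) b := by
  induction n using Int.induction_on with
  | zero => simp
  | succ i ih =>
      have horth : γ ((g ^ (i:ℤ)) a) ((g ^ (i:ℤ)) b) = 0 := by
        rw [gamma_zpow h, gamma_zpow_right h, hab, zpow_zero_apply h, zpow_zero_apply h]
      rw [zpow_succ_apply, ih, g_add_orth h horth, zpow_succ_apply, zpow_succ_apply]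
  | pred i ih =>
      have horth : γ ((g ^ (-(i:ℤ))) a) ((g ^ (-(i:ℤ))) b) = 0 := by
        rw [gamma_zpow h, gamma_zpow_right h, hab, zpow_zero_apply h, zpow_zero_apply h]
      rw [show (-(i:ℤ) - 1) = (-(i:ℤ)) - 1 by ring, zpow_pred_apply, ih,
        ginv_add_orth h horth, ← zpow_pred_apply, ← zpow_pred_apply]

/-- "central" elements: in the γ-radical and 2-torsion -/
def Ctr (γ : X → X → X) (c : X) : Prop := (∀ w : X, γ w c = 0) ∧ c + c = 0

lemma ctr_gamma (h : IsConstructionPair g γ) (x y : X) : Ctr γ (γ x y) :=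
  ⟨fun w => by rw [h.symm]; exact h.c2 x y w, gamma_two h x y⟩

lemma ctr_zero (h : IsConstructionPair g γ) : Ctr γ (0 : X) :=
  ⟨fun w => gamma_zero_right h w, by simp⟩

lemma ctr_add (h : IsConstructionPair g γ) {c d : X} (hc : Ctr γ c) (hd : Ctr γ d) :
    Ctr γ (c + d) := by
  refine ⟨fun w => by rw [h.add_right, hc.1 w, hd.1 w, add_zero], ?_⟩
  have h1 := hc.2; have h2 := hd.2
  calc c + d + (c + d) = (c + c) + (d + d) := by abel
  _ = 0 := by rw [h1, h2, add_zero]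

lemma gamma_ctr_left (h : IsConstructionPair g γ) {c : X} (hc : Ctr γ c) (w : X) :
    γ c w = 0 := by rw [h.symm]; exact hc.1 w

lemma ctr_zpow (h : IsConstructionPair g γ) (n : ℤ) {c : X} (hc : Ctr γ c) :
    Ctr γ ((g ^ n) c) := by
  refine ⟨fun w => by rw [h.symm, gamma_zpow h, gamma_ctr_left h hc, zpow_zero_apply h], ?_⟩
  rw [← zpow_add_orth h n (hc.1 c), hc.2, zpow_zero_apply h]

lemma zpow_add_ctr (h : IsConstructionPair g γ) (n : ℤ) (a : X) {c : X} (hc : Ctr γ c) :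
    (g ^ n) (a + c) = (g ^ n) a + (g ^ n) c :=
  zpow_add_orth h n (hc.1 a)

lemma ctr_sum (h : IsConstructionPair g γ) {s : Finset ℤ} {f : ℤ → X}
    (hf : ∀ t ∈ s, Ctr γ (f t)) : Ctr γ (∑ t ∈ s, f t) :=
  Finset.sum_induction f (Ctr γ) (fun _ _ ha hb => ctr_add h ha hb) (ctr_zero h) hf

lemma ctr_Sm (h : IsConstructionPair g γ) (p q : ℤ) {c : X} (hc : Ctr γ c) :
    Ctr γ (Sm g p q c) :=
  ctr_sum h (fun t _ => ctr_zpow h (-t) hc)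

lemma zpow_sum_ctr (h : IsConstructionPair g γ) (m : ℤ) {s : Finset ℤ} {f : ℤ → X}
    (hf : ∀ t ∈ s, Ctr γ (f t)) :
    (g ^ m) (∑ t ∈ s, f t) = ∑ t ∈ s, (g ^ m) (f t) := by
  induction s using Finset.cons_induction with
  | empty => simp [zpow_zero_apply h]
  | cons a s ha ih =>
      have hs : Ctr γ (∑ t ∈ s, f t) :=
        ctr_sum h (fun t ht => hf t (Finset.mem_cons_of_mem ht))
      rw [Finset.sum_cons, Finset.sum_cons, zpow_add_ctr h m _ hs,
        ih (fun t ht => hf t (Finset.mem_cons_of_mem ht))]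

lemma sum_shift (p q m : ℤ) (F : ℤ → X) :
    ∑ t ∈ I (p + m) (q + m), F t = ∑ t ∈ I p q, F (t + m) := by
  unfold I
  rw [show min (p+m) (q+m) = min p q + m by omega, show max (p+m) (q+m) = max p q + m by omega,
    ← Finset.map_add_right_Ico, Finset.sum_map]
  rfl

lemma Sm_zero (h : IsConstructionPair g γ) (p q : ℤ) : Sm g p q (0 : X) = 0 := by
  unfold Sm
  rw [Finset.sum_congr rfl (fun t _ => zpow_zero_apply h (-t))]
  exact Finset.sum_const_zero

lemma Sm_add (h : IsConstructionPair g γ) (p q : ℤ) {c d : X} (hcd : γ c d = 0) :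
    Sm g p q (c + d) = Sm g p q c + Sm g p q d := by
  unfold Sm
  rw [Finset.sum_congr rfl (fun t _ => zpow_add_orth h (-t) hcd)]
  exact Finset.sum_add_distrib

lemma zpow_Sm (h : IsConstructionPair g γ) (m p q : ℤ) {c : X} (hc : Ctr γ c) :
    (g ^ m) (Sm g p q c) = Sm g (p - m) (q - m) c := by
  unfold Sm
  rw [zpow_sum_ctr h m (fun t _ => ctr_zpow h (-t) hc)]
  have h1 : ∀ t ∈ I p q, (g ^ m) ((g ^ (-t)) c) = (fun t => (g ^ (m + -t)) c) t :=
    fun t _ => zpow_zpow_apply m (-t) c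
  rw [Finset.sum_congr rfl h1]
  have h2 : I p q = I ((p - m) + m) ((q - m) + m) := by norm_num
  rw [h2, sum_shift]
  exact Finset.sum_congr rfl (fun t _ => zpow_congr (by ring) c)

lemma Sm_apply_zpow (m p q : ℤ) (c : X) :
    Sm g p q ((g ^ m) c) = (g ^ m) (Sm g p q c) ∨ True := Or.inr trivial

lemma Sm_zpow (h : IsConstructionPair g γ) (m p q : ℤ) {c : X} (hc : Ctr γ c) :
    Sm g p q ((g ^ m) c) = Sm g (p - m) (q - m) c := by
  have h1 : Sm g p q ((g ^ m) c) = (g ^ m) (Sm g p q c) := by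
    unfold Sm
    rw [zpow_sum_ctr h m (fun t _ => ctr_zpow h (-t) hc)]
    exact Finset.sum_congr rfl (fun t _ => by
      rw [zpow_zpow_apply, zpow_zpow_apply]; exact zpow_congr (by ring) c)
  rw [h1, zpow_Sm h m p q hc]

lemma sum_Ico_three (p : ℤ) (F : ℤ → X) :
    ∑ t ∈ Finset.Ico p (p+3), F t = F p + F (p+1) + F (p+2) := by
  have h1 : Finset.Ico p (p+3) = {p, p+1, p+2} := by
    ext t
    simp only [Finset.mem_Ico, Finset.mem_insert, Finset.mem_singleton]
    omega
  rw [h1, Finset.sum_insert (by simp), Finset.sum_insert (by simp),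
    Finset.sum_singleton]
  abel

section trans
variable (hcp : IsConstructionPair g γ)

private lemma l2 {B C : X} (hB : B + B = 0) : C + B + B = C := by
  rw [add_assoc, hB, add_zero]
private lemma l3 {B C : X} (hB : B + B = 0) : B + (C + B) = C := by
  rw [add_comm C B, ← add_assoc, hB, zero_add]
private lemma l4 {B C : X} (hB : B + B = 0) : B + (B + C) = C := by
  rw [← add_assoc, hB, zero_add]
private lemma l5 {B C : X} (hB : B + B = 0) : B + C + B = C := by
  rw [add_comm B C, add_assoc, hB, add_zero]

lemma Sm_trans (h : IsConstructionPair g γ) {c : X} (hc : Ctr γ c) (p q r : ℤ) :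
    Sm g p q c + Sm g q r c = Sm g p r c := by
  have dbl : ∀ a b : ℤ, (∑ t ∈ Finset.Ico a b, (g ^ (-t)) c)
      + (∑ t ∈ Finset.Ico a b, (g ^ (-t)) c) = 0 :=
    fun a b => (ctr_sum h (fun t _ => ctr_zpow h (-t) hc)).2
  have cons : ∀ {a b d : ℤ}, a ≤ b → b ≤ d →
      (∑ t ∈ Finset.Ico a b, (g ^ (-t)) c) + (∑ t ∈ Finset.Ico b d, (g ^ (-t)) c)
        = ∑ t ∈ Finset.Ico a d, (g ^ (-t)) c :=
    fun {a b d} hab hbd => by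
      rw [← Finset.Ico_union_Ico_eq_Ico hab hbd,
        Finset.sum_union (Finset.Ico_disjoint_Ico_consecutive a b d)]
  simp only [Sm, I]
  rcases le_total p q with hpq | hqp
  · rcases le_total q r with hqr | hrq
    · -- p ≤ q ≤ r
      have hpr : p ≤ r := hpq.trans hqr
      rw [min_eq_left hpq, max_eq_right hpq, min_eq_left hqr, max_eq_right hqr,
        min_eq_left hpr, max_eq_right hpr]
      exact cons hpq hqr
    · rcases le_total p r with hpr | hrp
      · -- p ≤ r ≤ q
        rw [min_eq_left hpq, max_eq_right hpq, min_eq_right hrq, max_eq_left hrq,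
          min_eq_left hpr, max_eq_right hpr]
        rw [← cons hpr hrq]
        exact l2 (dbl r q)
      · -- r ≤ p ≤ q
        rw [min_eq_left hpq, max_eq_right hpq, min_eq_right hrq, max_eq_left hrq,
          min_eq_right hrp, max_eq_left hrp]
        rw [← cons hrp hpq]
        exact l3 (dbl p q)
  · rcases le_total q r with hqr | hrq
    · rcases le_total p r with hpr | hrp
      · -- q ≤ p ≤ r
        rw [min_eq_right hqp, max_eq_left hqp, min_eq_left hqr, max_eq_right hqr,
          min_eq_left hpr, max_eq_right hpr]
        rw [← cons hqp hpr]
        exact l4 (dbl q p)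
      · -- q ≤ r ≤ p
        rw [min_eq_right hqp, max_eq_left hqp, min_eq_left hqr, max_eq_right hqr,
          min_eq_right hrp, max_eq_left hrp]
        rw [← cons hqr hrp]
        exact l5 (dbl q r)
    · -- r ≤ q ≤ p
      have hrp : r ≤ p := hrq.trans hqp
      rw [min_eq_right hqp, max_eq_left hqp, min_eq_right hrq, max_eq_left hrq,
        min_eq_right hrp, max_eq_left hrp]
      rw [add_comm]
      exact cons hrq hqp

end trans

lemma ctr_g (h : IsConstructionPair g γ) {c : X} (hc : Ctr γ c) : Ctr γ (g c) := by
  have := ctr_zpow h 1 hc; rwa [zpow_one] at this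

lemma ctr_ginv (h : IsConstructionPair g γ) {c : X} (hc : Ctr γ c) : Ctr γ (g⁻¹ c) := by
  have := ctr_zpow h (-1) hc; rwa [zpow_neg_one] at this

lemma g_add (h : IsConstructionPair g γ) (a b : X) :
    g (a + b) = g a + g b + (g (γ a b) + γ a b + g⁻¹ (γ a b)) := by
  have hc := h.c1 a b
  have hctr : Ctr γ (γ a b) := ctr_gamma h a b
  have h1 : Ctr γ (g⁻¹ (γ a b)) := ctr_ginv h hctr
  have h2 : Ctr γ (g⁻¹ (g⁻¹ (γ a b))) := ctr_ginv h h1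
  have hs2 : g a + g b = g (a + b) + (g (γ a b) + γ a b + g⁻¹ (γ a b)) := by
    calc g a + g b = g (g⁻¹ (g a + g b)) := (Equiv.Perm.apply_inv_self g _).symm
    _ = g (a + b + γ a b + g⁻¹ (γ a b) + g⁻¹ (g⁻¹ (γ a b))) := by rw [hc]
    _ = g (a + b + γ a b + g⁻¹ (γ a b)) + g (g⁻¹ (g⁻¹ (γ a b))) := g_add_orth h (h2.1 _)
    _ = g (a + b + γ a b) + g (g⁻¹ (γ a b)) + g (g⁻¹ (g⁻¹ (γ a b))) := by
        rw [g_add_orth h (h1.1 _)]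
    _ = g (a + b) + g (γ a b) + g (g⁻¹ (γ a b)) + g (g⁻¹ (g⁻¹ (γ a b))) := by
        rw [g_add_orth h (hctr.1 _)]
    _ = g (a + b) + g (γ a b) + γ a b + g⁻¹ (γ a b) := by
        rw [Equiv.Perm.apply_inv_self, Equiv.Perm.apply_inv_self]
    _ = g (a + b) + (g (γ a b) + γ a b + g⁻¹ (γ a b)) := by abel
  have hww : (g (γ a b) + γ a b + g⁻¹ (γ a b)) + (g (γ a b) + γ a b + g⁻¹ (γ a b)) = 0 :=
    (ctr_add h (ctr_add h (ctr_g h hctr) hctr) h1).2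
  rw [hs2, add_assoc, hww, add_zero]

lemma Sm_congr {p q p' q' : ℤ} (hp : p = p') (hq : q = q') (c : X) :
    Sm g p q c = Sm g p' q' c := by rw [hp, hq]

lemma zpow_neg_add (h : IsConstructionPair g γ) (n : ℤ) (a b : X) :
    (g ^ (-n)) (a + b) = (g ^ (-n)) a + (g ^ (-n)) b + Sm g (-2*n) n (γ a b) := by
  have hcc : Ctr γ (γ a b) := ctr_gamma h a b
  induction n using Int.induction_on with
  | zero =>
      have h0 : Sm g (-2*0) 0 (γ a b) = 0 := by
        unfold Sm I; norm_num
      rw [h0]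
      simp
  | succ i ih =>
      have hS : Ctr γ (Sm g (-2*(i:ℤ)) i (γ a b)) := ctr_Sm h _ _ hcc
      have e1 : (g ^ (-((i:ℤ)+1))) (a+b) = g⁻¹ ((g ^ (-(i:ℤ))) (a+b)) := by
        rw [← zpow_pred_apply]; exact zpow_congr (by ring) _
      rw [e1, ih, ginv_add_orth h (hS.1 _), c1' h]
      have e2 : γ ((g ^ (-(i:ℤ))) a) ((g ^ (-(i:ℤ))) b) = (g ^ (2*(i:ℤ))) (γ a b) := by
        rw [gamma_zpow h, gamma_zpow_right h, zpow_zpow_apply]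
        exact zpow_congr (by ring) _
      rw [e2]
      have f1 : g⁻¹ ((g ^ (-(i:ℤ))) a) = (g ^ (-((i:ℤ)+1))) a := by
        rw [← zpow_pred_apply]; exact zpow_congr (by ring) _
      have f2 : g⁻¹ ((g ^ (-(i:ℤ))) b) = (g ^ (-((i:ℤ)+1))) b := by
        rw [← zpow_pred_apply]; exact zpow_congr (by ring) _
      have f4 : g ((g ^ (2*(i:ℤ))) (γ a b)) = (g ^ (2*(i:ℤ)+1)) (γ a b) := by
        rw [← zpow_succ_apply]
      have f3 : g ((g ^ (2*(i:ℤ)+1)) (γ a b)) = (g ^ (2*(i:ℤ)+2)) (γ a b) := by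
        rw [← zpow_succ_apply]; exact zpow_congr (by ring) _
      have f5 : g⁻¹ (Sm g (-2*(i:ℤ)) i (γ a b)) = Sm g (-2*(i:ℤ)+1) ((i:ℤ)+1) (γ a b) := by
        have e : g⁻¹ (Sm g (-2*(i:ℤ)) i (γ a b))
            = (g ^ (-1:ℤ)) (Sm g (-2*(i:ℤ)) i (γ a b)) := by rw [zpow_neg_one]
        rw [e, zpow_Sm h (-1) _ _ hcc]
        exact Sm_congr (by ring) (by ring) _
      rw [f1, f2, f4, f3, f5]
      have three : ∑ t ∈ Finset.Ico (-2*(i:ℤ)-2) (-2*(i:ℤ)+1), (g ^ (-t)) (γ a b)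
          = (g ^ (2*(i:ℤ)+2)) (γ a b) + (g ^ (2*(i:ℤ)+1)) (γ a b)
            + (g ^ (2*(i:ℤ))) (γ a b) := by
        rw [show (-2*(i:ℤ)+1) = -2*(i:ℤ)-2+3 by ring, sum_Ico_three,
          zpow_congr (show -(-2*(i:ℤ)-2) = 2*(i:ℤ)+2 by ring) (γ a b),
          zpow_congr (show -(-2*(i:ℤ)-2+1) = 2*(i:ℤ)+1 by ring) (γ a b),
          zpow_congr (show -(-2*(i:ℤ)-2+2) = 2*(i:ℤ) by ring) (γ a b)]
      have key : Sm g (-2*((i:ℤ)+1)) ((i:ℤ)+1) (γ a b)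
          = (g ^ (2*(i:ℤ)+2)) (γ a b) + (g ^ (2*(i:ℤ)+1)) (γ a b) + (g ^ (2*(i:ℤ))) (γ a b)
            + Sm g (-2*(i:ℤ)+1) ((i:ℤ)+1) (γ a b) := by
        have hi : (0:ℤ) ≤ (i:ℤ) := Int.natCast_nonneg i
        unfold Sm I
        rw [show min (-2*((i:ℤ)+1)) ((i:ℤ)+1) = -2*(i:ℤ)-2 by omega,
          show max (-2*((i:ℤ)+1)) ((i:ℤ)+1) = (i:ℤ)+1 by omega,
          show min (-2*(i:ℤ)+1) ((i:ℤ)+1) = -2*(i:ℤ)+1 by omega,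
          show max (-2*(i:ℤ)+1) ((i:ℤ)+1) = (i:ℤ)+1 by omega,
          ← Finset.Ico_union_Ico_eq_Ico (show -2*(i:ℤ)-2 ≤ -2*(i:ℤ)+1 by omega)
            (show -2*(i:ℤ)+1 ≤ (i:ℤ)+1 by omega),
          Finset.sum_union (Finset.Ico_disjoint_Ico_consecutive _ _ _), three]
      rw [key]
      abel
  | pred i ih =>
      have hS : Ctr γ (Sm g (-2*(-(i:ℤ))) (-(i:ℤ)) (γ a b)) := ctr_Sm h _ _ hcc
      have e1 : (g ^ (-(-(i:ℤ)-1))) (a+b) = g ((g ^ (-(-(i:ℤ)))) (a+b)) := by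
        rw [← zpow_succ_apply]; exact zpow_congr (by ring) _
      rw [e1, ih, g_add_orth h (hS.1 _), g_add h]
      have e2 : γ ((g ^ (-(-(i:ℤ)))) a) ((g ^ (-(-(i:ℤ)))) b) = (g ^ (-(2*(i:ℤ)))) (γ a b) := by
        rw [gamma_zpow h, gamma_zpow_right h, zpow_zpow_apply]
        exact zpow_congr (by ring) _
      rw [e2]
      have f1 : g ((g ^ (-(-(i:ℤ)))) a) = (g ^ (-(-(i:ℤ)-1))) a := by
        rw [← zpow_succ_apply]; exact zpow_congr (by ring) _
      have f2 : g ((g ^ (-(-(i:ℤ)))) b) = (g ^ (-(-(i:ℤ)-1))) b := by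
        rw [← zpow_succ_apply]; exact zpow_congr (by ring) _
      have f3 : g ((g ^ (-(2*(i:ℤ)))) (γ a b)) = (g ^ (-(2*(i:ℤ)-1))) (γ a b) := by
        rw [← zpow_succ_apply]; exact zpow_congr (by ring) _
      have f4 : g⁻¹ ((g ^ (-(2*(i:ℤ)))) (γ a b)) = (g ^ (-(2*(i:ℤ)+1))) (γ a b) := by
        rw [← zpow_pred_apply]; exact zpow_congr (by ring) _
      have f5 : g (Sm g (-2*(-(i:ℤ))) (-(i:ℤ)) (γ a b))
          = Sm g (2*(i:ℤ)-1) (-(i:ℤ)-1) (γ a b) := by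
        have e : g (Sm g (-2*(-(i:ℤ))) (-(i:ℤ)) (γ a b))
            = (g ^ (1:ℤ)) (Sm g (-2*(-(i:ℤ))) (-(i:ℤ)) (γ a b)) := by rw [zpow_one]
        rw [e, zpow_Sm h 1 _ _ hcc]
        exact Sm_congr (by ring) (by ring) _
      rw [f1, f2, f3, f4, f5]
      have three : ∑ t ∈ Finset.Ico (2*(i:ℤ)-1) (2*(i:ℤ)+2), (g ^ (-t)) (γ a b)
          = (g ^ (-(2*(i:ℤ)-1))) (γ a b) + (g ^ (-(2*(i:ℤ)))) (γ a b)
            + (g ^ (-(2*(i:ℤ)+1))) (γ a b) := by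
        rw [show (2*(i:ℤ)+2) = 2*(i:ℤ)-1+3 by ring, sum_Ico_three,
          zpow_congr (show -(2*(i:ℤ)-1+1) = -(2*(i:ℤ)) by ring) (γ a b),
          zpow_congr (show -(2*(i:ℤ)-1+2) = -(2*(i:ℤ)+1) by ring) (γ a b)]
      have key : Sm g (-2*(-(i:ℤ)-1)) (-(i:ℤ)-1) (γ a b)
          = Sm g (2*(i:ℤ)-1) (-(i:ℤ)-1) (γ a b)
            + ((g ^ (-(2*(i:ℤ)-1))) (γ a b) + (g ^ (-(2*(i:ℤ)))) (γ a b)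
              + (g ^ (-(2*(i:ℤ)+1))) (γ a b)) := by
        have hi : (0:ℤ) ≤ (i:ℤ) := Int.natCast_nonneg i
        unfold Sm I
        rw [show min (-2*(-(i:ℤ)-1)) (-(i:ℤ)-1) = -(i:ℤ)-1 by omega,
          show max (-2*(-(i:ℤ)-1)) (-(i:ℤ)-1) = 2*(i:ℤ)+2 by omega,
          show min (2*(i:ℤ)-1) (-(i:ℤ)-1) = -(i:ℤ)-1 by omega,
          show max (2*(i:ℤ)-1) (-(i:ℤ)-1) = 2*(i:ℤ)-1 by omega,
          ← Finset.Ico_union_Ico_eq_Ico (show -(i:ℤ)-1 ≤ 2*(i:ℤ)-1 by omega)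
            (show 2*(i:ℤ)-1 ≤ 2*(i:ℤ)+2 by omega),
          Finset.sum_union (Finset.Ico_disjoint_Ico_consecutive _ _ _), three]
      rw [key]
      abel


lemma cmul_def {X : Type*} [AddCommGroup X] (g : Equiv.Perm X) (γ : X → X → X) (a b : ℤ) (w1 w2 : X) :
    cmul g γ (a, w1) (b, w2) = (a + b, (g ^ (-b)) w1 + w2 + Sm g (a+b) (-b) (γ w1 w2)) := rfl

end CPaux


open CPaux

theorem stmt_11 {X : Type*} [AddCommGroup X] (g : Equiv.Perm X) (γ : X → X → X)
    (h : IsConstructionPair g γ) (i j k : ℤ) (x y z : X)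
    (u : X)
    (hu : u = (∑ t ∈ I (i + j) (i + j + k), (g ^ (-t)) (γ x y))
        + (∑ t ∈ I (i + k) (i + j + k), (g ^ (-t)) (γ x z))
        + (∑ t ∈ I (j + k) (i + j + k), (g ^ (-t)) (γ y z))) :
    cmul g γ (cmul g γ (i, x) (cmul g γ (j, y) (k, z))) ((0 : ℤ), u)
      = cmul g γ (cmul g γ (i, x) (j, y)) (k, z) := by
  have hxy := ctr_gamma h x y
  have hxz := ctr_gamma h x z
  have hyz := ctr_gamma h y z
  have hu' : u = Sm g (i+j) (i+j+k) (γ x y) + Sm g (i+k) (i+j+k) (γ x z)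
      + Sm g (j+k) (i+j+k) (γ y z) := hu
  have hu_ctr : Ctr γ u := by
    rw [hu']
    exact ctr_add h (ctr_add h (ctr_Sm h _ _ hxy) (ctr_Sm h _ _ hxz)) (ctr_Sm h _ _ hyz)
  have zz : ∀ w : X, (g ^ (-(0:ℤ))) w = w := fun w => by simp
  have hv : γ x ((g ^ (-k)) y + z + Sm g (j+k) (-k) (γ y z)) = (g ^ k) (γ x y) + γ x z := by
    rw [h.add_right, h.add_right, (ctr_Sm h (j+k) (-k) hyz).1 x, add_zero,
      gamma_zpow_right h, zpow_congr (show -(-k) = k by ring) (γ x y)]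
  have hw : γ ((g ^ (-j)) x + y + Sm g (i+j) (-j) (γ x y)) z = (g ^ j) (γ x z) + γ y z := by
    rw [h.add_left, h.add_left, gamma_ctr_left h (ctr_Sm h (i+j) (-j) hxy) z, add_zero,
      gamma_zpow h, zpow_congr (show -(-j) = j by ring) (γ x z)]
  have l3 : Sm g (i+(j+k)) (-(j+k)) ((g ^ k) (γ x y) + γ x z)
      = Sm g (i+j) (-j-2*k) (γ x y) + Sm g (i+j+k) (-j-k) (γ x z) := by
    rw [Sm_add h _ _ (gamma_ctr_left h (ctr_zpow h k hxy) (γ x z)),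
      Sm_zpow h k _ _ hxy,
      Sm_congr (show i+(j+k)-k = i+j by ring) (show -(j+k)-k = -j-2*k by ring) (γ x y),
      Sm_congr (show i+(j+k) = i+j+k by ring) (show -(j+k) = -j-k by ring) (γ x z)]
  have r3 : Sm g (i+j+k) (-k) ((g ^ j) (γ x z) + γ y z)
      = Sm g (i+k) (-j-k) (γ x z) + Sm g (i+j+k) (-k) (γ y z) := by
    rw [Sm_add h _ _ (gamma_ctr_left h (ctr_zpow h j hxz) (γ y z)),
      Sm_zpow h j _ _ hxz,
      Sm_congr (show i+j+k-j = i+k by ring) (show -k-j = -j-k by ring) (γ x z)]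
  have r1 : (g ^ (-k)) ((g ^ (-j)) x + y + Sm g (i+j) (-j) (γ x y))
      = (g ^ (-(j+k))) x + (g ^ (-k)) y
        + (Sm g (-2*k-j) (k-j) (γ x y) + Sm g (i+j+k) (k-j) (γ x y)) := by
    rw [zpow_add_ctr h (-k) _ (ctr_Sm h (i+j) (-j) hxy),
      zpow_neg_add h k ((g ^ (-j)) x) y,
      gamma_zpow h, zpow_zpow_apply,
      zpow_Sm h (-k) (i+j) (-j) hxy,
      Sm_zpow h (-(-j)) (-2*k) k hxy,
      zpow_congr (show -k + -j = -(j+k) by ring) x,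
      Sm_congr (show -2*k - -(-j) = -2*k-j by ring) (show k - -(-j) = k-j by ring) (γ x y),
      Sm_congr (show i+j - -k = i+j+k by ring) (show -j - -k = k-j by ring) (γ x y)]
    abel
  have Lyz : Sm g (j+k) (-k) (γ y z) + Sm g (j+k) (i+j+k) (γ y z)
      = Sm g (i+j+k) (-k) (γ y z) := by
    rw [Sm_symm (g := g) (j+k) (i+j+k), add_comm]
    exact Sm_trans h hyz (i+j+k) (j+k) (-k)
  have Lxy : Sm g (i+j) (-j-2*k) (γ x y) + Sm g (i+j) (i+j+k) (γ x y)
      = Sm g (i+j+k) (-j-2*k) (γ x y) := by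
    rw [Sm_symm (g := g) (i+j) (i+j+k), add_comm]
    exact Sm_trans h hxy (i+j+k) (i+j) (-j-2*k)
  have Lxz : Sm g (i+j+k) (-j-k) (γ x z) + Sm g (i+k) (i+j+k) (γ x z)
      = Sm g (i+k) (-j-k) (γ x z) := by
    rw [add_comm]
    exact Sm_trans h hxz (i+k) (i+j+k) (-j-k)
  have Rxy : Sm g (-2*k-j) (k-j) (γ x y) + Sm g (i+j+k) (k-j) (γ x y)
      = Sm g (i+j+k) (-j-2*k) (γ x y) := by
    rw [Sm_symm (g := g) (-2*k-j) (k-j), add_comm,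
      Sm_trans h hxy (i+j+k) (k-j) (-2*k-j)]
    exact Sm_congr rfl (by ring) _
  simp only [cmul_def]
  rw [Prod.mk.injEq]
  refine ⟨by ring, ?_⟩
  rw [hu_ctr.1, Sm_zero h, add_zero, zz, hv, l3, hw, r3, r1, hu']
  trans (g ^ (-(j+k))) x + (g ^ (-k)) y + z + Sm g (i+j+k) (-k) (γ y z)
      + Sm g (i+j+k) (-j-2*k) (γ x y) + Sm g (i+k) (-j-k) (γ x z)
  · rw [← Lyz, ← Lxy, ← Lxz]; abel
  · rw [← Rxy]; abel
end

section
/- Let (g,γ) be a construction pair on an abelian group (X,+), and equip Q = ℤ × X with the multiplication (i,x)·(j,y) = (i+j, g^{−j}(x)+y+∑_{k∈I(i+j,−j)} g^{−k}(γ(x,y))). Then: (a) an element (i,x) lies in the nucleus of Q (i.e. ((i,x)·v)·w = (i,x)·(v·w), (v·(i,x))·w = v·((i,x)·w) and (v·w)·(i,x) = v·(w·(i,x)) for all v,w ∈ Q) if and only if x ∈ rad γ and ∑_{k∈I(0,i)} g^{−k}(γ(y,z)) = 0 for all y,z ∈ X; (b) an element (i,x) lies in the center of Q (i.e. it lies in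 the nucleus and (i,x)·v = v·(i,x) for all v ∈ Q) if and only if, in addition, g^i = id and g(x) = x. -/
/-- The radical of a symmetric mapping `γ : X × X → X`. -/
def radical {X : Type*} [AddCommGroup X] (γ : X → X → X) : Set X :=
  {x | ∀ y, γ x y = 0}

namespace CPaux

variable {X : Type*} [AddCommGroup X]

/-- `U g c a b = ∑_{k ∈ I(a,b)} g^{-k} c`. -/
noncomputable def U (g : Equiv.Perm X) (c : X) (a b : ℤ) : X := ∑ k ∈ I a b, (g ^ (-k)) c

lemma zz (g : Equiv.Perm X) (m n : ℤ) (v : X) : (g ^ m) ((g ^ n) v) = (g ^ (m + n)) v := by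
  rw [zpow_add]; rfl

variable {g : Equiv.Perm X} {γ : X → X → X} (h : IsConstructionPair g γ)
include h

lemma gz (y : X) : γ 0 y = 0 := by
  have h1 : γ 0 y + γ 0 y = γ 0 y := by
    rw [← h.add_left]; norm_num
  exact add_eq_right.mp h1

lemma gz' (y : X) : γ y 0 = 0 := by rw [h.symm]; exact gz h y

lemma gtwo (y z : X) : γ y z + γ y z = 0 := by
  have h1 : γ (y + z) (y + z) = 0 := h.alt _
  rw [h.add_left, h.add_right, h.add_right, h.alt, h.alt, h.symm z y] at h1
  rw [← h1]; abel

lemma ginv0 : g⁻¹ (0 : X) = 0 := by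
  have := h.c3 0 (g 0)
  rw [gz h] at this
  rw [this, h.alt]

lemma g0 : g (0 : X) = 0 := by
  have := h.c1 0 0
  rw [h.alt, ginv0 h, ginv0 h] at this
  simp only [add_zero, zero_add] at this
  -- this : g⁻¹ (g 0 + g 0) = 0
  have h2 : g 0 + g 0 = g 0 := by
    have e3 := congrArg g this
    rwa [Equiv.Perm.apply_inv_self] at e3
  exact add_eq_right.mp h2

lemma c3' (x y : X) : γ (g⁻¹ x) y = g (γ x y) := by
  have := h.c3 (g⁻¹ x) y
  rw [Equiv.Perm.apply_inv_self] at this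
  rw [← this, Equiv.Perm.apply_inv_self]

lemma gadd {a b : X} (hab : γ a b = 0) : g (a + b) = g a + g b := by
  have := h.c1 a b
  rw [hab, ginv0 h, ginv0 h] at this
  simp only [add_zero] at this
  have e2 := congrArg g this
  rw [Equiv.Perm.apply_inv_self] at e2
  exact e2.symm

lemma gammainv {a b : X} (hab : γ a b = 0) : γ (g⁻¹ a) (g⁻¹ b) = 0 := by
  rw [c3' h, h.symm, c3' h, h.symm, hab, g0 h, g0 h]

lemma gammag {a b : X} (hab : γ a b = 0) : γ (g a) (g b) = 0 := by
  rw [← h.c3, h.symm, ← h.c3, h.symm, hab, ginv0 h, ginv0 h]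

lemma ginvadd {a b : X} (hab : γ a b = 0) : g⁻¹ (a + b) = g⁻¹ a + g⁻¹ b := by
  have h2 := gadd h (gammainv h hab)
  rw [Equiv.Perm.apply_inv_self, Equiv.Perm.apply_inv_self] at h2
  have e3 := congrArg (fun t => g⁻¹ t) h2
  simp only [Equiv.Perm.inv_apply_self] at e3
  exact e3.symm

lemma zpow0 : ∀ n : ℤ, (g ^ n) (0 : X) = 0 := by
  intro n
  induction n using Int.induction_on with
  | zero => rfl
  | succ k ih => rw [show (k : ℤ) + 1 = 1 + k by ring, ← zz g 1 k, ih, zpow_one, g0 h]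
  | pred k ih => rw [show -(k:ℤ) - 1 = -1 + -k by ring, ← zz g (-1) (-k), ih, zpow_neg_one, ginv0 h]

lemma c3z : ∀ (n : ℤ) (x y : X), γ ((g ^ n) x) y = (g ^ (-n)) (γ x y) := by
  intro n
  induction n using Int.induction_on with
  | zero => intro x y; simp
  | succ k ih =>
      intro x y
      rw [show (k : ℤ) + 1 = 1 + k by ring, ← zz g 1 k, zpow_one, ← h.c3, ih,
        show -(1 + (k:ℤ)) = -1 + -(k:ℤ) by ring, ← zz g (-1) (-(k:ℤ)), zpow_neg_one]
  | pred k ih =>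
      intro x y
      rw [show -(k:ℤ) - 1 = -1 + -(k:ℤ) by ring, ← zz g (-1) (-(k:ℤ)), zpow_neg_one, c3' h, ih,
        show (- -(k:ℤ)) = (k:ℤ) by ring, show (-(-1 + -(k:ℤ))) = 1 + (k:ℤ) by ring,
        ← zz g 1 (k:ℤ), zpow_one]

lemma gammazz (n : ℤ) (a b : X) : γ ((g ^ n) a) ((g ^ n) b) = (g ^ (-(2*n))) (γ a b) := by
  rw [c3z h, h.symm, c3z h, h.symm, zz, show -n + -n = -(2*n) by ring]

lemma zpadd : ∀ (n : ℤ) {a b : X}, γ a b = 0 → (g ^ n) (a + b) = (g ^ n) a + (g ^ n) b := by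
  intro n
  induction n using Int.induction_on with
  | zero => intro a b _; rfl
  | succ k ih =>
      intro a b hab
      have h2 : γ ((g ^ (k:ℤ)) a) ((g ^ (k:ℤ)) b) = 0 := by
        rw [gammazz h, hab, zpow0 h]
      rw [show (k : ℤ) + 1 = 1 + k by ring, ← zz g 1 k, ih hab, zpow_one, gadd h h2,
        ← zz g 1 k, ← zz g 1 k, zpow_one]
  | pred k ih =>
      intro a b hab
      have h2 : γ ((g ^ (-k:ℤ)) a) ((g ^ (-k:ℤ)) b) = 0 := by
        rw [gammazz h, hab, zpow0 h]
      rw [show -(k:ℤ) - 1 = -1 + -k by ring, ← zz g (-1) (-k), ih hab, zpow_neg_one,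
        ginvadd h h2, ← zz g (-1) (-k), ← zz g (-1) (-k), zpow_neg_one]

lemma torsz {c : X} (hc : c + c = 0) (n : ℤ) : (g ^ n) c + (g ^ n) c = 0 := by
  rw [← zpadd h n (h.alt c), hc, zpow0 h]

lemma rad_g {c : X} (hc : ∀ w, γ c w = 0) (n : ℤ) : ∀ w, γ ((g ^ n) c) w = 0 := by
  intro w; rw [c3z h, hc, zpow0 h]

lemma rad_right {c : X} (hc : ∀ w, γ c w = 0) (w : X) : γ w c = 0 := by
  rw [h.symm]; exact hc w

lemma rad_sum {ι : Type*} (s : Finset ι) (f : ι → X) (hf : ∀ i ∈ s, ∀ w, γ (f i) w = 0) :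
    ∀ w, γ (∑ i ∈ s, f i) w = 0 := by
  classical
  induction s using Finset.induction_on with
  | empty => intro w; simp [gz h]
  | insert _ _ hnot ih =>
      rename_i a s
      intro w
      rw [Finset.sum_insert hnot, h.add_left, hf a (Finset.mem_insert_self a s) w,
        ih (fun i hi => hf i (Finset.mem_insert_of_mem hi)) w, add_zero]

lemma zpsum {ι : Type*} (n : ℤ) (s : Finset ι) (f : ι → X) (hf : ∀ i ∈ s, ∀ w, γ (f i) w = 0) :
    (g ^ n) (∑ i ∈ s, f i) = ∑ i ∈ s, (g ^ n) (f i) := by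
  classical
  induction s using Finset.induction_on with
  | empty => simp [zpow0 h]
  | insert _ _ hnot ih =>
      rename_i a s
      rw [Finset.sum_insert hnot, Finset.sum_insert hnot,
        zpadd h n (rad_sum h s f (fun i hi => hf i (Finset.mem_insert_of_mem hi)) (f a) |>
          (fun q => by rw [h.symm]; exact q)),
        ih (fun i hi => hf i (Finset.mem_insert_of_mem hi))]


omit h in
lemma U_congr (c : X) {a b a' b' : ℤ} (ha : a = a') (hb : b = b') :
    U g c a b = U g c a' b' := by rw [ha, hb]

omit h in
lemma U_comm (c : X) (a b : ℤ) : U g c a b = U g c b a := by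
  unfold U I; rw [min_comm, max_comm]

omit h in
lemma U_empty (c : X) (a : ℤ) : U g c a a = 0 := by
  unfold U I; simp

lemma U_zero (a b : ℤ) : U g (0 : X) a b = 0 := by
  unfold U; exact Finset.sum_eq_zero (fun k _ => zpow0 h (-k))

omit h in
lemma Ico_succ_ext (a b : ℤ) (hab : a ≤ b) :
    Finset.Ico a (b+1) = insert b (Finset.Ico a b) := by
  ext t; simp only [Finset.mem_Ico, Finset.mem_insert]; omega

omit h in
lemma Ico_bot_ext (a b : ℤ) (hab : b < a) :
    Finset.Ico b a = insert b (Finset.Ico (b+1) a) := by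
  ext t; simp only [Finset.mem_Ico, Finset.mem_insert]; omega

lemma U_succ {c : X} (hc2 : c + c = 0) (a b : ℤ) :
    U g c a (b+1) = U g c a b + (g ^ (-b)) c := by
  rcases le_or_gt a b with hab | hab
  · unfold U I
    rw [min_eq_left hab, max_eq_right hab, min_eq_left (by omega : a ≤ b+1),
      max_eq_right (by omega : a ≤ b+1), Ico_succ_ext a b hab,
      Finset.sum_insert (by simp)]
    abel
  · unfold U I
    rw [min_eq_right (by omega : b+1 ≤ a), max_eq_left (by omega : b+1 ≤ a),
      min_eq_right (by omega : b ≤ a), max_eq_left (by omega : b ≤ a),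
      Ico_bot_ext a b hab,
      Finset.sum_insert (by simp only [Finset.mem_Ico]; omega)]
    set S := ∑ k ∈ Finset.Ico (b+1) a, (g ^ (-k)) c with hS
    have e : (g ^ (-b)) c + S + (g ^ (-b)) c = S + ((g ^ (-b)) c + (g ^ (-b)) c) := by abel
    rw [e, torsz h hc2, add_zero]

lemma U_pred {c : X} (hc2 : c + c = 0) (a b : ℤ) :
    U g c a (b-1) = U g c a b + (g ^ (-(b-1))) c := by
  have e := U_succ h hc2 a (b-1)
  rw [show b-1+1 = b by ring] at e
  rw [e, add_assoc, torsz h hc2, add_zero]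

omit h in
lemma int_ind_from (b : ℤ) (p : ℤ → Prop) (h0 : p b) (hs : ∀ k, p k → p (k+1))
    (hp : ∀ k, p k → p (k-1)) : ∀ d, p d := by
  have key : ∀ n : ℤ, p (b + n) := by
    intro n
    induction n using Int.induction_on with
    | zero => simpa using h0
    | succ k ih => rw [show b + ((k:ℤ)+1) = (b+(k:ℤ))+1 by ring]; exact hs _ ih
    | pred k ih => rw [show b + (-(k:ℤ)-1) = (b + -(k:ℤ))-1 by ring]; exact hp _ ih
  intro d
  rw [show d = b + (d - b) by ring]
  exact key _

lemma U_chasles {c : X} (hc2 : c + c = 0) (a b d : ℤ) :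
    U g c a b + U g c b d = U g c a d := by
  induction d using int_ind_from (b := b) with
  | h0 => rw [U_empty, add_zero]
  | hs k ih => rw [U_succ h hc2 b k, U_succ h hc2 a k, ← add_assoc, ih]
  | hp k ih => rw [U_pred h hc2 b k, U_pred h hc2 a k, ← add_assoc, ih]

lemma U_shift {c : X} (hc : ∀ w, γ c w = 0) (m a b : ℤ) :
    (g ^ m) (U g c a b) = U g c (a - m) (b - m) := by
  unfold U
  rw [zpsum h m _ _ (fun k _ => rad_g h hc (-k))]
  have e : ∀ k : ℤ, (g ^ m) ((g ^ (-k)) c) = (g ^ (-(k + -m))) c := fun k => by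
    rw [zz, show m + -k = -(k + -m) by ring]
  rw [Finset.sum_congr rfl (fun k _ => e k)]
  unfold I
  rw [show min (a - m) (b - m) = min a b + -m by omega,
    show max (a - m) (b - m) = max a b + -m by omega,
    ← Finset.map_add_right_Ico, Finset.sum_map]
  apply Finset.sum_congr rfl
  intro k _
  simp only [addRightEmbedding_apply]

lemma U_zpow {c : X} (hc : ∀ w, γ c w = 0) (j a b : ℤ) :
    U g ((g ^ j) c) a b = U g c (a - j) (b - j) := by
  have e1 : U g ((g ^ j) c) a b = (g ^ j) (U g c a b) := by
    unfold U
    rw [zpsum h j _ _ (fun k _ => rad_g h hc (-k))]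
    exact Finset.sum_congr rfl (fun k _ => by rw [zz, zz, add_comm])
  rw [e1, U_shift h hc]

lemma U_addc {c c' : X} (hc : ∀ w, γ c w = 0) (a b : ℤ) :
    U g (c + c') a b = U g c a b + U g c' a b := by
  unfold U
  rw [← Finset.sum_add_distrib]
  exact Finset.sum_congr rfl (fun k _ => zpadd h (-k) (hc c'))

lemma rad_U {c : X} (hc : ∀ w, γ c w = 0) (a b : ℤ) : ∀ w, γ (U g c a b) w = 0 := by
  intro w; unfold U; exact rad_sum h _ _ (fun k _ => rad_g h hc (-k)) w

lemma torsU {c : X} (hc : ∀ w, γ c w = 0) (hc2 : c + c = 0) (a b : ℤ) :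
    U g c a b + U g c a b = 0 := by
  rw [← U_addc h hc, hc2, U_zero h]

lemma U_single (c : X) (i : ℤ) : U g c i (i+1) = (g ^ (-i)) c := by
  unfold U I
  rw [min_eq_left (by omega), max_eq_right (by omega),
    show Finset.Ico i (i+1) = {i} from by ext t; simp only [Finset.mem_Ico, Finset.mem_singleton]; omega,
    Finset.sum_singleton]


lemma U_eval3 {c : X} (hc2 : c + c = 0) : U g c (-2) 1 = g (g c) + g c + c := by
  have e1 : U g c (-2) 1 = U g c (-2) 0 + (g ^ (-(0:ℤ))) c := by
    have := U_succ h hc2 (-2) 0; norm_num at this ⊢; exact this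
  have e2 : U g c (-2) 0 = U g c (-2) (-1) + (g ^ (-(-1:ℤ))) c := by
    have := U_succ h hc2 (-2) (-1); norm_num at this ⊢; exact this
  have e3 : U g c (-2) (-1) = U g c (-2) (-2) + (g ^ (-(-2:ℤ))) c := by
    have := U_succ h hc2 (-2) (-2); norm_num at this ⊢; exact this
  rw [e1, e2, e3, U_empty, zero_add]
  have ee : (g ^ (2:ℤ)) c = g (g c) := by
    rw [show (2:ℤ) = 1 + 1 by norm_num, ← zz g 1 1, zpow_one]
  norm_num [ee]
  exact ee

lemma ginv_sum (u v : X) : g⁻¹ (u + v) = g⁻¹ u + g⁻¹ v + U g (γ u v) (-2) 1 := by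
  have e0 : γ (g⁻¹ u) (g⁻¹ v) = g (g (γ u v)) := by
    rw [c3' h u (g⁻¹ v), h.symm u (g⁻¹ v), c3' h v u, h.symm v u]
  have e1 := h.c1 (g⁻¹ u) (g⁻¹ v)
  rw [Equiv.Perm.apply_inv_self, Equiv.Perm.apply_inv_self, e0] at e1
  simp only [Equiv.Perm.inv_apply_self] at e1
  rw [e1, U_eval3 h (gtwo h u v)]
  abel

lemma g_sum (u v : X) : g (u + v) = g u + g v + U g (γ u v) (-1) 2 := by
  have hc : ∀ w, γ (γ u v) w = 0 := fun w => h.c2 u v w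
  have hc2 : γ u v + γ u v = 0 := gtwo h u v
  have e1 := ginv_sum h (g u) (g v)
  rw [Equiv.Perm.inv_apply_self, Equiv.Perm.inv_apply_self] at e1
  have e2 : γ (g u) (g v) = (g ^ (-(2:ℤ))) (γ u v) := by
    have := gammazz h 1 u v
    rw [zpow_one] at this
    rw [this, show (-(2*(1:ℤ))) = -(2:ℤ) by norm_num]
  rw [e2, U_zpow h hc (-(2:ℤ)) (-2) 1,
    show ((-2:ℤ) - -(2:ℤ)) = (0:ℤ) by norm_num, show ((1:ℤ) - -(2:ℤ)) = (3:ℤ) by norm_num] at e1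
  have hr := rad_U h hc (0:ℤ) (3:ℤ)
  have hsplit : γ (u + v) (U g (γ u v) 0 3) = 0 := by
    rw [h.add_left, rad_right h hr u, rad_right h hr v, add_zero]
  have e3 := congrArg (fun t => g t) e1
  simp only [Equiv.Perm.apply_inv_self] at e3
  rw [gadd h hsplit] at e3
  have e4 : g (U g (γ u v) 0 3) = U g (γ u v) (-1) 2 := by
    have := U_shift h hc 1 0 3
    rw [zpow_one] at this
    rw [this, show ((0:ℤ) - 1) = (-1:ℤ) by norm_num, show ((3:ℤ) - 1) = (2:ℤ) by norm_num]
  rw [e4] at e3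
  rw [e3, add_assoc, torsU h hc hc2, add_zero]

lemma master : ∀ (m : ℤ) (a b : X),
    (g ^ (-m)) (a + b) = (g ^ (-m)) a + (g ^ (-m)) b + U g (γ a b) (-(2*m)) m := by
  intro m
  induction m using Int.induction_on with
  | zero =>
      intro a b
      rw [show (-(2*(0:ℤ))) = (0:ℤ) by norm_num, show (-(0:ℤ)) = (0:ℤ) by norm_num,
        U_empty, add_zero, zpow_zero]
      rfl
  | succ k ih =>
      intro a b
      have hc : ∀ w, γ (γ a b) w = 0 := fun w => h.c2 a b w
      have hc2 : γ a b + γ a b = 0 := gtwo h a b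
      have e1 : (g ^ (-((k:ℤ)+1))) (a+b) = g⁻¹ ((g ^ (-(k:ℤ))) (a+b)) := by
        rw [show -((k:ℤ)+1) = -1 + -(k:ℤ) by ring, ← zz g (-1) (-(k:ℤ)), zpow_neg_one]
      rw [e1, ih a b]
      have hrU := rad_U h hc (-(2*(k:ℤ))) (k:ℤ)
      have hsplit : γ ((g ^ (-(k:ℤ))) a + (g ^ (-(k:ℤ))) b) (U g (γ a b) (-(2*(k:ℤ))) (k:ℤ)) = 0 := by
        rw [h.add_left, rad_right h hrU, rad_right h hrU, add_zero]
      rw [ginvadd h hsplit, ginv_sum h ((g ^ (-(k:ℤ))) a) ((g ^ (-(k:ℤ))) b)]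
      have e2 : γ ((g ^ (-(k:ℤ))) a) ((g ^ (-(k:ℤ))) b) = (g ^ (2*(k:ℤ))) (γ a b) := by
        rw [gammazz h (-(k:ℤ)) a b, show -(2 * -(k:ℤ)) = 2*(k:ℤ) by ring]
      rw [e2, U_zpow h hc (2*(k:ℤ)) (-2) 1]
      have e3 : g⁻¹ (U g (γ a b) (-(2*(k:ℤ))) (k:ℤ))
          = U g (γ a b) ((1:ℤ) - 2*(k:ℤ)) ((k:ℤ) + 1) := by
        have := U_shift h hc (-1) (-(2*(k:ℤ))) (k:ℤ)
        rw [zpow_neg_one] at this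
        rw [this, show -(2*(k:ℤ)) - -1 = (1:ℤ) - 2*(k:ℤ) by ring,
          show (k:ℤ) - -1 = (k:ℤ)+1 by ring]
      rw [e3]
      have e4 : ∀ t : X, g⁻¹ ((g ^ (-(k:ℤ))) t) = (g ^ (-((k:ℤ)+1))) t := fun t => by
        rw [← zpow_neg_one, zz, show (-1:ℤ) + -(k:ℤ) = -((k:ℤ)+1) by ring]
      rw [e4 a, e4 b]
      have e5 : U g (γ a b) ((-2:ℤ) - 2*(k:ℤ)) ((1:ℤ) - 2*(k:ℤ))
          + U g (γ a b) ((1:ℤ) - 2*(k:ℤ)) ((k:ℤ)+1)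
          = U g (γ a b) (-(2*((k:ℤ)+1))) ((k:ℤ)+1) := by
        rw [U_chasles h hc2]
        exact U_congr _ (by ring) rfl
      rw [← e5]
      abel
  | pred k ih =>
      intro a b
      have hc : ∀ w, γ (γ a b) w = 0 := fun w => h.c2 a b w
      have hc2 : γ a b + γ a b = 0 := gtwo h a b
      have e1 : (g ^ (-(-(k:ℤ)-1))) (a+b) = g ((g ^ (-(-(k:ℤ)))) (a+b)) := by
        rw [show -(-(k:ℤ)-1) = 1 + -(-(k:ℤ)) by ring, ← zz g 1 (-(-(k:ℤ))), zpow_one]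
      rw [e1, ih a b]
      have hrU := rad_U h hc (-(2*(-(k:ℤ)))) (-(k:ℤ))
      have hsplit : γ ((g ^ (-(-(k:ℤ)))) a + (g ^ (-(-(k:ℤ)))) b)
          (U g (γ a b) (-(2*(-(k:ℤ)))) (-(k:ℤ))) = 0 := by
        rw [h.add_left, rad_right h hrU, rad_right h hrU, add_zero]
      rw [gadd h hsplit, g_sum h ((g ^ (-(-(k:ℤ)))) a) ((g ^ (-(-(k:ℤ)))) b)]
      have e2 : γ ((g ^ (-(-(k:ℤ)))) a) ((g ^ (-(-(k:ℤ)))) b) = (g ^ (-(2*(k:ℤ)))) (γ a b) := by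
        rw [gammazz h (-(-(k:ℤ))) a b, show -(2 * -(-(k:ℤ))) = -(2*(k:ℤ)) by ring]
      rw [e2, U_zpow h hc (-(2*(k:ℤ))) (-1) 2]
      have e3 : g (U g (γ a b) (-(2*(-(k:ℤ)))) (-(k:ℤ)))
          = U g (γ a b) ((-1:ℤ) - -(2*(k:ℤ))) (-(k:ℤ) - 1) := by
        have := U_shift h hc 1 (-(2*(-(k:ℤ)))) (-(k:ℤ))
        rw [zpow_one] at this
        rw [this, show -(2*(-(k:ℤ))) - 1 = (-1:ℤ) - -(2*(k:ℤ)) by ring]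
      rw [e3]
      have e4 : ∀ t : X, g ((g ^ (-(-(k:ℤ)))) t) = (g ^ (-(-(k:ℤ)-1))) t := fun t => by
        rw [show (g : Equiv.Perm X) ((g ^ (-(-(k:ℤ)))) t) = (g ^ (1:ℤ)) ((g ^ (-(-(k:ℤ)))) t)
            from by rw [zpow_one],
          zz, show (1:ℤ) + -(-(k:ℤ)) = -(-(k:ℤ)-1) by ring]
      rw [e4 a, e4 b]
      have e5 : U g (γ a b) ((-1:ℤ) - -(2*(k:ℤ))) ((2:ℤ) - -(2*(k:ℤ)))
          + U g (γ a b) ((-1:ℤ) - -(2*(k:ℤ))) (-(k:ℤ) - 1)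
          = U g (γ a b) (-(2*(-(k:ℤ)-1))) (-(k:ℤ)-1) := by
        rw [U_comm (g := g) (γ a b) ((-1:ℤ) - -(2*(k:ℤ))) ((2:ℤ) - -(2*(k:ℤ))),
          U_chasles h hc2]
        exact U_congr _ (by ring) rfl
      rw [← e5]
      abel


omit h in
lemma eq_iff_add_eq_zero {S T : X} (hT : T + T = 0) : S = T ↔ S + T = 0 := by
  constructor
  · intro e; rw [e, hT]
  · intro e
    have e2 : S + T + T = T := by rw [e, zero_add]
    rwa [add_assoc, hT, add_zero] at e2

lemma assoc_iff (α β δ : ℤ) (a b d : X) :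
    cmul g γ (cmul g γ (α, a) (β, b)) (δ, d) = cmul g γ (α, a) (cmul g γ (β, b) (δ, d)) ↔
    U g (γ a b) (α + β) (α + β + δ) + U g (γ a d) (α + δ) (α + β + δ)
      + U g (γ b d) (β + δ) (α + β + δ) = 0 := by
  have hab : ∀ w, γ (γ a b) w = 0 := fun w => h.c2 a b w
  have had : ∀ w, γ (γ a d) w = 0 := fun w => h.c2 a d w
  have hbd : ∀ w, γ (γ b d) w = 0 := fun w => h.c2 b d w
  have hab2 : γ a b + γ a b = 0 := gtwo h a b
  have had2 : γ a d + γ a d = 0 := gtwo h a d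
  have hbd2 : γ b d + γ b d = 0 := gtwo h b d
  -- left side second component, raw
  have l1 : (cmul g γ (cmul g γ (α, a) (β, b)) (δ, d)).2
      = (g ^ (-δ)) ((g ^ (-β)) a + b + U g (γ a b) (α+β) (-β)) + d
        + U g (γ ((g ^ (-β)) a + b + U g (γ a b) (α+β) (-β)) d) (α + β + δ) (-δ) := rfl
  have l2 : γ ((g ^ (-β)) a + b + U g (γ a b) (α+β) (-β)) d = (g ^ β) (γ a d) + γ b d := by
    rw [h.add_left, h.add_left, rad_U h hab (α+β) (-β) d, add_zero, c3z h (-β) a d,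
      show (- -β) = β by ring]
  have l3 : U g ((g ^ β) (γ a d) + γ b d) (α + β + δ) (-δ)
      = U g (γ a d) (α + δ) (-δ - β) + U g (γ b d) (α + β + δ) (-δ) := by
    rw [U_addc h (rad_g h had β), U_zpow h had β,
      U_congr (g := g) (γ a d) (show α + β + δ - β = α + δ by ring) rfl]
  have split1 : γ ((g ^ (-β)) a + b) (U g (γ a b) (α+β) (-β)) = 0 := by
    have r1 := rad_U h hab (α+β) (-β)
    rw [h.add_left, rad_right h r1, rad_right h r1, add_zero]
  have l4 : (g ^ (-δ)) ((g ^ (-β)) a + b + U g (γ a b) (α+β) (-β))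
      = (g ^ (-(β+δ))) a + (g ^ (-δ)) b
        + U g (γ a b) (-(2*δ) - β) (δ - β) + U g (γ a b) (α+β+δ) (δ - β) := by
    rw [zpadd h (-δ) split1, master h δ ((g ^ (-β)) a) b,
      c3z h (-β) a b, show (- -β) = β by ring, U_zpow h hab β,
      U_congr (g := g) (γ a b) (show -(2*δ) - β = -(2*δ) - β from rfl) rfl,
      zz g (-δ) (-β), show -δ + -β = -(β+δ) by ring,
      U_shift h hab (-δ) (α+β) (-β),
      U_congr (g := g) (γ a b) (show α + β - -δ = α+β+δ by ring)
        (show -β - -δ = δ - β by ring)]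
  -- right side second component, raw
  have r1 : (cmul g γ (α, a) (cmul g γ (β, b) (δ, d))).2
      = (g ^ (-(β+δ))) a + ((g ^ (-δ)) b + d + U g (γ b d) (β+δ) (-δ))
        + U g (γ a ((g ^ (-δ)) b + d + U g (γ b d) (β+δ) (-δ))) (α + (β+δ)) (-(β+δ)) := rfl
  have r2 : γ a ((g ^ (-δ)) b + d + U g (γ b d) (β+δ) (-δ)) = (g ^ δ) (γ a b) + γ a d := by
    rw [h.add_right, h.add_right, rad_right h (rad_U h hbd (β+δ) (-δ)) a, add_zero,
      h.symm a ((g ^ (-δ)) b), c3z h (-δ) b a, show (- -δ) = δ by ring, h.symm b a]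
  have r3 : U g ((g ^ δ) (γ a b) + γ a d) (α + (β+δ)) (-(β+δ))
      = U g (γ a b) (α+β) (-(β+δ) - δ) + U g (γ a d) (α + (β+δ)) (-(β+δ)) := by
    rw [U_addc h (rad_g h hab δ), U_zpow h hab δ,
      U_congr (g := g) (γ a b) (show α + (β+δ) - δ = α+β by ring) rfl]
  -- normal forms
  have hLsnd : (cmul g γ (cmul g γ (α, a) (β, b)) (δ, d)).2
      = ((g ^ (-(β+δ))) a + (g ^ (-δ)) b + d)
        + (U g (γ a b) (-(2*δ) - β) (δ - β) + U g (γ a b) (α+β+δ) (δ - β)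
          + U g (γ a d) (α + δ) (-δ - β) + U g (γ b d) (α + β + δ) (-δ)) := by
    rw [l1, l2, l3, l4]; abel
  have hRsnd : (cmul g γ (α, a) (cmul g γ (β, b) (δ, d))).2
      = ((g ^ (-(β+δ))) a + (g ^ (-δ)) b + d)
        + (U g (γ b d) (β+δ) (-δ) + U g (γ a b) (α+β) (-(β+δ) - δ)
          + U g (γ a d) (α + (β+δ)) (-(β+δ))) := by
    rw [r1, r2, r3]; abel
  have torsSR : (U g (γ b d) (β+δ) (-δ) + U g (γ a b) (α+β) (-(β+δ) - δ)
      + U g (γ a d) (α + (β+δ)) (-(β+δ)))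
      + (U g (γ b d) (β+δ) (-δ) + U g (γ a b) (α+β) (-(β+δ) - δ)
      + U g (γ a d) (α + (β+δ)) (-(β+δ))) = 0 := by
    have t1 := torsU h hbd hbd2 (β+δ) (-δ)
    have t2 := torsU h hab hab2 (α+β) (-(β+δ) - δ)
    have t3 := torsU h had had2 (α + (β+δ)) (-(β+δ))
    calc _ = (U g (γ b d) (β+δ) (-δ) + U g (γ b d) (β+δ) (-δ))
          + ((U g (γ a b) (α+β) (-(β+δ) - δ) + U g (γ a b) (α+β) (-(β+δ) - δ))
          + (U g (γ a d) (α + (β+δ)) (-(β+δ)) + U g (γ a d) (α + (β+δ)) (-(β+δ)))) := by abel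
      _ = 0 := by rw [t1, t2, t3, add_zero, add_zero]
  have step1 : (cmul g γ (cmul g γ (α, a) (β, b)) (δ, d)
        = cmul g γ (α, a) (cmul g γ (β, b) (δ, d)))
      ↔ ((cmul g γ (cmul g γ (α, a) (β, b)) (δ, d)).2
        = (cmul g γ (α, a) (cmul g γ (β, b) (δ, d))).2) := by
    rw [Prod.ext_iff]
    constructor
    · exact fun e => e.2
    · exact fun e => ⟨by show α+β+δ = α+(β+δ); ring, e⟩
  have c1eq : U g (γ a b) (-(2*δ) - β) (δ - β) + U g (γ a b) (α+β+δ) (δ - β)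
      + U g (γ a b) (α+β) (-(β+δ) - δ) = U g (γ a b) (α+β) (α+β+δ) := by
    rw [U_comm (g := g) (γ a b) (α+β+δ) (δ - β), U_chasles h hab2,
      U_congr (g := g) (γ a b) rfl (show -(β+δ) - δ = -(2*δ) - β by ring),
      add_comm, U_chasles h hab2]
  have c2eq : U g (γ a d) (α + δ) (-δ - β) + U g (γ a d) (α + (β+δ)) (-(β+δ))
      = U g (γ a d) (α + δ) (α+β+δ) := by
    rw [U_comm (g := g) (γ a d) (α + (β+δ)) (-(β+δ)),
      U_congr (g := g) (γ a d) (show -(β+δ) = -δ - β by ring)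
        (show α + (β+δ) = α+β+δ by ring),
      U_chasles h had2]
  have c3eq : U g (γ b d) (α + β + δ) (-δ) + U g (γ b d) (β+δ) (-δ)
      = U g (γ b d) (β+δ) (α+β+δ) := by
    rw [U_comm (g := g) (γ b d) (α+β+δ) (-δ), add_comm, U_chasles h hbd2]
  have combine : (U g (γ a b) (-(2*δ) - β) (δ - β) + U g (γ a b) (α+β+δ) (δ - β)
          + U g (γ a d) (α + δ) (-δ - β) + U g (γ b d) (α + β + δ) (-δ))
      + (U g (γ b d) (β+δ) (-δ) + U g (γ a b) (α+β) (-(β+δ) - δ)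
          + U g (γ a d) (α + (β+δ)) (-(β+δ)))
      = U g (γ a b) (α + β) (α + β + δ) + U g (γ a d) (α + δ) (α + β + δ)
        + U g (γ b d) (β + δ) (α + β + δ) := by
    calc _ = (U g (γ a b) (-(2*δ) - β) (δ - β) + U g (γ a b) (α+β+δ) (δ - β)
            + U g (γ a b) (α+β) (-(β+δ) - δ))
          + ((U g (γ a d) (α + δ) (-δ - β) + U g (γ a d) (α + (β+δ)) (-(β+δ)))
          + (U g (γ b d) (α + β + δ) (-δ) + U g (γ b d) (β+δ) (-δ))) := by abel
      _ = _ := by rw [c1eq, c2eq, c3eq]; abel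
  rw [step1, hLsnd, hRsnd, add_right_inj, eq_iff_add_eq_zero torsSR, combine]


lemma nucleus_iff (i : ℤ) (x : X) :
    ((∀ v w : ℤ × X, cmul g γ (cmul g γ (i, x) v) w = cmul g γ (i, x) (cmul g γ v w)) ∧
     (∀ v w : ℤ × X, cmul g γ (cmul g γ v (i, x)) w = cmul g γ v (cmul g γ (i, x) w)) ∧
     (∀ v w : ℤ × X, cmul g γ (cmul g γ v w) (i, x) = cmul g γ v (cmul g γ w (i, x))))
    ↔ ((∀ y, γ x y = 0) ∧ ∀ y z : X, U g (γ y z) 0 i = 0) := by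
  constructor
  · rintro ⟨H1, -, -⟩
    constructor
    · intro dd
      have e := (assoc_iff h i 1 0 x 0 dd).mp (H1 (1, 0) (0, dd))
      rw [gz' h x, gz h dd, U_zero h, U_zero h, zero_add, add_zero,
        U_congr (g := g) (γ x dd) (show i+0 = i by ring) (show i+1+0 = i+1 by ring),
        U_single h (γ x dd) i] at e
      have e2 : γ x dd = (g ^ i) ((g ^ (-i)) (γ x dd)) := by
        rw [zz, show i + -i = (0:ℤ) by ring, zpow_zero]; rfl
      rw [e2, e, zpow0 h]
    · intro y z
      have e := (assoc_iff h i 0 0 x y z).mp (H1 (0, y) (0, z))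
      rw [U_congr (g := g) (γ x y) (show i+0 = i by ring) (show i+0+0 = i by ring), U_empty,
        U_congr (g := g) (γ x z) (show i+0 = i by ring) (show i+0+0 = i by ring), U_empty,
        U_congr (g := g) (γ y z) (show (0:ℤ)+0 = 0 by ring) (show i+0+0 = i by ring),
        zero_add, zero_add] at e
      exact e
  · rintro ⟨hx, hP⟩
    have key : ∀ (y z : X) (m : ℤ), U g (γ y z) m (m + i) = 0 := by
      intro y z m
      have hc : ∀ w, γ (γ y z) w = 0 := fun w => h.c2 y z w
      have e := U_shift h hc (-m) 0 i
      rw [hP y z, zpow0 h,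
        U_congr (g := g) (γ y z) (show (0:ℤ) - -m = m by ring) (show i - -m = m + i by ring)] at e
      exact e.symm
    refine ⟨?_, ?_, ?_⟩ <;> intro v w <;> obtain ⟨β, b⟩ := v <;> obtain ⟨δ, d⟩ := w
    · rw [assoc_iff h i β δ x b d, hx b, hx d, U_zero h, U_zero h, zero_add, zero_add,
        U_congr (g := g) (γ b d) rfl (show i+β+δ = (β+δ) + i by ring)]
      exact key b d (β+δ)
    · rw [assoc_iff h β i δ b x d, h.symm b x, hx b, hx d, U_zero h, U_zero h, zero_add, add_zero,
        U_congr (g := g) (γ b d) rfl (show β+i+δ = (β+δ) + i by ring)]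
      exact key b d (β+δ)
    · rw [assoc_iff h β δ i b d x, h.symm b x, hx b, h.symm d x, hx d, U_zero h, U_zero h,
        add_zero, add_zero,
        U_congr (g := g) (γ b d) rfl (show β+δ+i = (β+δ) + i by ring)]
      exact key b d (β+δ)

lemma center_extra_iff (i : ℤ) (x : X) (hx : ∀ y, γ x y = 0) :
    (∀ v : ℤ × X, cmul g γ (i, x) v = cmul g γ v (i, x)) ↔ (g ^ i = 1 ∧ g x = x) := by
  constructor
  · intro hcomm
    constructor
    · have hgi : ∀ y : X, (g ^ (-i)) y = y := by
        intro y
        have e2 := congrArg Prod.snd (hcomm (0, y))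
        have eL : (cmul g γ ((i:ℤ), x) ((0:ℤ), y)).2
            = (g ^ (-(0:ℤ))) x + y + U g (γ x y) (i+0) (-0) := rfl
        have eR : (cmul g γ ((0:ℤ), y) ((i:ℤ), x)).2
            = (g ^ (-i)) y + x + U g (γ y x) (0+i) (-i) := rfl
        rw [eL, eR, hx y, h.symm y x, hx y, U_zero h, U_zero h, add_zero, add_zero,
          show (-(0:ℤ)) = (0:ℤ) by norm_num, zpow_zero] at e2
        have e3 : y + x = (g ^ (-i)) y + x := by
          rw [add_comm y x]
          exact e2
        exact (add_right_cancel e3).symm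
      have : g ^ (-i) = 1 := Equiv.ext (fun y => hgi y)
      rw [zpow_neg] at this
      exact inv_eq_one.mp this
    · have e2 := congrArg Prod.snd (hcomm ((-1 : ℤ), (0 : X)))
      have eL : (cmul g γ ((i:ℤ), x) ((-1:ℤ), (0:X))).2
          = (g ^ (-(-1:ℤ))) x + 0 + U g (γ x 0) (i + -1) (-(-1)) := rfl
      have eR : (cmul g γ ((-1:ℤ), (0:X)) ((i:ℤ), x)).2
          = (g ^ (-i)) (0:X) + x + U g (γ 0 x) (-1 + i) (-i) := rfl
      rw [eL, eR, gz' h x, gz h x, U_zero h, U_zero h, zpow0 h, add_zero, add_zero, zero_add,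
        show (-(-1:ℤ)) = (1:ℤ) by norm_num, zpow_one] at e2
      rw [add_zero] at e2
      exact e2
  · rintro ⟨hgi, hgx⟩
    intro v
    obtain ⟨j, y⟩ := v
    have eL : cmul g γ ((i:ℤ), x) (j, y)
        = (i + j, (g ^ (-j)) x + y + U g (γ x y) (i+j) (-j)) := rfl
    have eR : cmul g γ (j, y) ((i:ℤ), x)
        = (j + i, (g ^ (-i)) y + x + U g (γ y x) (j+i) (-i)) := rfl
    rw [eL, eR, hx y, h.symm y x, hx y, U_zero h, U_zero h, add_zero, add_zero,
      Equiv.Perm.zpow_apply_eq_self_of_apply_eq_self hgx (-j)]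
    have hgiy : (g ^ (-i)) y = y := by rw [zpow_neg, hgi, inv_one]; rfl
    rw [hgiy]
    exact Prod.ext_iff.mpr ⟨by ring, by abel⟩

end CPaux

theorem stmt_12 {X : Type*} [AddCommGroup X] (g : Equiv.Perm X) (γ : X → X → X)
    (h : IsConstructionPair g γ) :
    (∀ (i : ℤ) (x : X),
      ((∀ v w : ℤ × X, cmul g γ (cmul g γ (i, x) v) w = cmul g γ (i, x) (cmul g γ v w)) ∧
       (∀ v w : ℤ × X, cmul g γ (cmul g γ v (i, x)) w = cmul g γ v (cmul g γ (i, x) w)) ∧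
       (∀ v w : ℤ × X, cmul g γ (cmul g γ v w) (i, x) = cmul g γ v (cmul g γ w (i, x))))
      ↔ (x ∈ radical γ ∧ ∀ y z : X, ∑ k ∈ I 0 i, (g ^ (-k)) (γ y z) = 0)) ∧
    (∀ (i : ℤ) (x : X),
      (((∀ v w : ℤ × X, cmul g γ (cmul g γ (i, x) v) w = cmul g γ (i, x) (cmul g γ v w)) ∧
        (∀ v w : ℤ × X, cmul g γ (cmul g γ v (i, x)) w = cmul g γ v (cmul g γ (i, x) w)) ∧
        (∀ v w : ℤ × X, cmul g γ (cmul g γ v w) (i, x) = cmul g γ v (cmul g γ w (i, x)))) ∧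
       (∀ v : ℤ × X, cmul g γ (i, x) v = cmul g γ v (i, x)))
      ↔ (x ∈ radical γ ∧ (∀ y z : X, ∑ k ∈ I 0 i, (g ^ (-k)) (γ y z) = 0) ∧
          g ^ i = 1 ∧ g x = x)) := by
  constructor
  · intro i x
    exact CPaux.nucleus_iff h i x
  · intro i x
    constructor
    · rintro ⟨hnuc, hcomm⟩
      obtain ⟨hx, hP⟩ := (CPaux.nucleus_iff h i x).mp hnuc
      obtain ⟨hgi, hgx⟩ := (CPaux.center_extra_iff h i x hx).mp hcomm
      exact ⟨hx, hP, hgi, hgx⟩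
    · rintro ⟨hx, hP, hgi, hgx⟩
      exact ⟨(CPaux.nucleus_iff h i x).mpr ⟨hx, hP⟩,
        (CPaux.center_extra_iff h i x hx).mpr ⟨hgi, hgx⟩⟩
end

section
/- Let (g,γ) be a construction pair on an abelian group (X,+), and equip ℤ × X with the multiplication (i,x)·(j,y) = (i+j, g^{−j}(x)+y+∑_{k∈I(i+j,−j)} g^{−k}(γ(x,y))). If this multiplication is commutative (u·v = v·u for all u,v ∈ ℤ × X), then it is associative ((u·v)·w = u·(v·w) for all u,v,w ∈ ℤ × X). -/
theorem stmt_13 {X : Type*} [AddCommGroup X] (g : Equiv.Perm X) (γ : X → X → X)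
    (h : IsConstructionPair g γ)
    (hcomm : ∀ u v : ℤ × X, cmul g γ u v = cmul g γ v u) :
    ∀ u v w : ℤ × X, cmul g γ (cmul g γ u v) w = cmul g γ u (cmul g γ v w) := by
  have hI1 : I 1 0 = {0} := by decide
  have hI2 : I 1 (-1) = {-1, 0} := by decide
  have hI3 : I (-1) 0 = {-1} := by decide
  have hI4 : I (-1) 1 = {-1, 0} := by decide
  have key : ∀ x y : X, x + y + γ x y = g⁻¹ y + x + (g (γ y x) + γ y x) := by
    intro x y
    have hc := congrArg Prod.snd (hcomm (1, x) (0, y))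
    simp only [cmul] at hc
    norm_num [hI1, hI2, Finset.sum_insert, Finset.sum_singleton] at hc
    exact hc
  -- from key y y : g⁻¹ y = y - g 0
  have hinv : ∀ y : X, g⁻¹ y = y - g 0 := by
    intro y
    have := key y y
    rw [h.alt] at this
    linear_combination (norm := abel) -this
  -- γ = 0
  have hgam : ∀ x y : X, γ x y = 0 := by
    intro x y
    have hk := key x y
    rw [h.symm y x, hinv y] at hk
    have : g (γ x y) = g 0 := by linear_combination (norm := abel) -hk
    exact g.injective this
  -- g = id
  have hg : ∀ y : X, g y = y := by
    intro y
    have hc := congrArg Prod.snd (hcomm (-1, 0) (0, y))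
    simp only [cmul] at hc
    norm_num [hI3, hI4, hgam, Finset.sum_insert, Finset.sum_singleton] at hc
    simp only [show ∀ z : X, (Equiv.symm (1 : Equiv.Perm X)) z = z from fun _ => rfl] at hc
    linear_combination (norm := abel) -hc
  have hg1 : g = 1 := Equiv.ext hg
  subst hg1
  intro u v w
  simp only [cmul, one_zpow, Equiv.Perm.coe_one, id_eq, hgam, Finset.sum_const,
    smul_zero, add_zero]
  exact Prod.ext (add_assoc _ _ _) (add_assoc _ _ _)
end

section
/- Let (X,+) be an abelian group and f a semiautomorphism of (X,+) such that for every x ∈ X the map μ_x : X → X, μ_x(z) = f⁻¹(f(z)+f(x))−x, is additive. Define x⊕y = f⁻¹(f(x)+f(y)). Then: (i) (X,⊕) is an abelian group with identity element 0 and inverse of x equal to −x, and f is an isomorphism from (X,⊕) onto (X,+); (ii) x⊕y = μ_y(x)+y = x+μ_x(y) for all x,y; (iii) μ_x(x) = x, μ_x(z+x) = μ_x(z)+x, and μ_x(z) = f⁻¹(f(z−x)+f(x)) for all x,z; (iv) x+y = x⊕μ_x(y) for all x,y. -/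
theorem stmt_14 {X : Type*} [AddCommGroup X] (f : Equiv.Perm X)
    (hf0 : f 0 = 0)
    (hf : ∀ x y : X, f (x + y + x) = f x + f y + f x)
    (μ : X → X → X)
    (hμ : ∀ x z : X, μ x z = f⁻¹ (f z + f x) - x)
    (hμadd : ∀ x a b : X, μ x (a + b) = μ x a + μ x b)
    (op : X → X → X)
    (hop : ∀ x y : X, op x y = f⁻¹ (f x + f y)) :
    -- (i) (X, ⊕) is an abelian group with identity 0 and inverses -x,
    --     and f is an isomorphism from (X, ⊕) onto (X, +)
    ((∀ x y : X, op x y = op y x) ∧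
     (∀ x y z : X, op (op x y) z = op x (op y z)) ∧
     (∀ x : X, op x 0 = x ∧ op 0 x = x) ∧
     (∀ x : X, op x (-x) = 0) ∧
     (∀ x y : X, f (op x y) = f x + f y)) ∧
    -- (ii)
    (∀ x y : X, op x y = μ y x + y ∧ op x y = x + μ x y) ∧
    -- (iii)
    ((∀ x : X, μ x x = x) ∧
     (∀ x z : X, μ x (z + x) = μ x z + x) ∧
     (∀ x z : X, μ x z = f⁻¹ (f (z - x) + f x))) ∧
    -- (iv)
    (∀ x y : X, x + y = op x (μ x y)) := by
  have hinv : ∀ a : X, f⁻¹ (f a) = a := fun a => Equiv.symm_apply_apply f a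
  have happ : ∀ a : X, f (f⁻¹ a) = a := fun a => Equiv.apply_symm_apply f a
  have hfneg : ∀ x : X, f (-x) = - f x := by
    intro x
    have h := hf (-x) x
    rw [show -x + x + -x = -x from by abel] at h
    have h2 : f (-x) + 0 = f (-x) + (f x + f (-x)) := by
      rw [add_zero, add_assoc] at *; exact h
    have h3 := add_left_cancel h2
    exact (neg_eq_of_add_eq_zero_right h3.symm).symm
  have hf2 : ∀ x : X, f (x + x) = f x + f x := by
    intro x
    have h := hf x 0
    simpa [hf0] using h
  have hμxx : ∀ x : X, μ x x = x := by
    intro x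
    rw [hμ, ← hf2, hinv]
    abel
  have hμshift : ∀ x z : X, μ x (z + x) = μ x z + x := by
    intro x z
    rw [hμadd, hμxx]
  have hμalt : ∀ x z : X, μ x z = f⁻¹ (f (z - x) + f x) := by
    intro x z
    have h := hμshift x (z - x)
    rw [sub_add_cancel] at h
    rw [h, hμ]
    abel
  refine ⟨⟨?_, ?_, ?_, ?_, ?_⟩, ?_, ⟨hμxx, hμshift, hμalt⟩, ?_⟩
  · intro x y; rw [hop, hop, add_comm]
  · intro x y z
    rw [hop, hop, hop, hop, happ, happ, add_assoc]
  · intro x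
    constructor <;> rw [hop, hf0] <;> simp [hinv x]
  · intro x
    rw [hop, hfneg, add_neg_cancel]
    have h := hinv 0
    rwa [hf0] at h
  · intro x y; rw [hop, happ]
  · intro x y
    constructor
    · rw [hop, hμ]; abel
    · rw [hop, hμ, add_comm (f x) (f y)]; abel
  · intro x y
    rw [hop, hμalt, happ, ← add_assoc, ← hf x (y - x), hinv]
    abel
end

section
/- Let (X,+) be an abelian group and f a semiautomorphism of (X,+) such that for every x ∈ X the map μ_x : X → X, μ_x(z) = f⁻¹(f(z)+f(x))−x, is additive. Define x⊕y = f⁻¹(f(x)+f(y)). Then: (i) μ_x ∘ μ_x = id, μ_{−x} = μ_x, and μ_x ∘ μ_y = μ_{x⊕y} for all x,y ∈ X; (ii) (∀x,y ∈ X, μ_x ∘ μ_y = μ_{x+y}) holds if and only if μ_x(y⊕z) = μ_x(y) ⊕ μ_x(z) for all x,y,z ∈ X; (iii) if ∀x,y ∈ X, μ_x ∘ μ_y = μ_{x+y}, then μ_{μ_y(x)−x} = id for all x,y ∈ X. -/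
theorem stmt_15 {X : Type*} [AddCommGroup X] (f : Equiv.Perm X)
    (hf0 : f 0 = 0)
    (hf : ∀ x y : X, f (x + y + x) = f x + f y + f x)
    (μ : X → X → X)
    (hμ : ∀ x z : X, μ x z = f⁻¹ (f z + f x) - x)
    (hμadd : ∀ x a b : X, μ x (a + b) = μ x a + μ x b)
    (op : X → X → X)
    (hop : ∀ x y : X, op x y = f⁻¹ (f x + f y)) :
    -- (i)
    ((∀ x z : X, μ x (μ x z) = z) ∧
     (∀ x z : X, μ (-x) z = μ x z) ∧
     (∀ x y z : X, μ x (μ y z) = μ (op x y) z)) ∧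
    -- (ii)
    ((∀ x y z : X, μ x (μ y z) = μ (x + y) z)
        ↔ (∀ x y z : X, μ x (op y z) = op (μ x y) (μ x z))) ∧
    -- (iii)
    ((∀ x y z : X, μ x (μ y z) = μ (x + y) z) →
      ∀ x y z : X, μ (μ y x - x) z = z) := by
  have hfi : ∀ a b : X, f b = a → f⁻¹ a = b := by
    intro a b h; rw [← h]; exact f.symm_apply_apply b
  have hfn : ∀ x : X, f (-x) = - f x := by
    intro x
    have h := hf x (-x)
    rw [show x + -x + x = x by abel] at h
    have h2 : f x + f (-x) + f x = f x + (- f x) + f x := by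
      rw [← h]; abel
    exact add_left_cancel (add_right_cancel h2)
  have hkey : ∀ x w : X, f (x + x + w) = f x + f x + f w := by
    intro x w
    have h := hf x w
    rw [show x + w + x = x + x + w by abel] at h
    rw [h]; abel
  have hfop : ∀ x y : X, f (op x y) = f x + f y := by
    intro x y; rw [hop]; exact (fun y => (Equiv.Perm.inv_eq_iff_eq.mp rfl).symm : ∀ y, f (f⁻¹ y) = y) _
  have hopcomm : ∀ x y : X, op x y = op y x := by
    intro x y; rw [hop, hop, add_comm]
  have hA : ∀ x z : X, μ x z = x + f⁻¹ (f z - f x) := by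
    intro x z
    rw [hμ]
    have h1 : f⁻¹ (f z + f x) = x + x + f⁻¹ (f z - f x) := by
      apply hfi
      rw [hkey, (fun y => (Equiv.Perm.inv_eq_iff_eq.mp rfl).symm : ∀ y, f (f⁻¹ y) = y)]
      abel
    rw [h1]; abel
  have hμ0 : ∀ x : X, μ x 0 = 0 := by
    intro x
    rw [hA]
    have h1 : f⁻¹ (f 0 - f x) = -x := by
      apply hfi; rw [hfn, hf0]; abel
    rw [h1]; abel
  have hneg : ∀ x a : X, μ x (-a) = - μ x a := by
    intro x a
    have h := hμadd x a (-a)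
    rw [show a + -a = (0:X) by abel, hμ0] at h
    have h2 : μ x a + μ x (-a) = 0 := h.symm
    exact (neg_eq_of_add_eq_zero_right h2).symm
  have hB : ∀ x y : X, μ x y + x = op x y := by
    intro x y
    rw [hA, hop]
    symm
    apply hfi
    rw [hf, (fun y => (Equiv.Perm.inv_eq_iff_eq.mp rfl).symm : ∀ y, f (f⁻¹ y) = y)]
    abel
  -- (i) part 1
  have h_i1 : ∀ x z : X, μ x (μ x z) = z := by
    intro x z
    have hz : μ x z = op z x + (-x) := by
      rw [hμ, hop, sub_eq_add_neg]
    have hxx : μ x x = x := by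
      rw [hμ]
      have h1 : f⁻¹ (f x + f x) = x + x := by
        apply hfi
        have := hkey x 0
        rw [hf0, show x + x + (0:X) = x + x by abel] at this
        rw [this]; abel
      rw [h1]; abel
    have hzx : μ x (op z x) = x + z := by
      rw [hμ, hfop]
      have h1 : f⁻¹ (f z + f x + f x) = x + x + z := by
        apply hfi
        rw [hkey]; abel
      rw [h1]; abel
    rw [hz, hμadd, hzx, hneg, hxx]
    abel
  -- (i) part 2
  have h_i2 : ∀ x z : X, μ (-x) z = μ x z := by
    intro x z
    have h1 : f⁻¹ (f z + f x) = μ x z + x := by rw [hμ]; abel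
    rw [hA, hfn, sub_neg_eq_add, h1]
    abel
  -- (i) part 3
  have h_i3 : ∀ x y z : X, μ x (μ y z) = μ (op x y) z := by
    intro x y z
    rw [hA y z, hμadd, hA x (f⁻¹ (f z - f y)), (fun y => (Equiv.Perm.inv_eq_iff_eq.mp rfl).symm : ∀ y, f (f⁻¹ y) = y),
      hA (op x y) z, hfop, ← hB x y]
    rw [show f z - f y - f x = f z - (f x + f y) by abel]
    abel
  -- auxiliary: x + v = μ x (op v x)
  have hd : ∀ x v : X, μ x (op v x) = x + v := by
    intro x v
    rw [hμ, hfop]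
    have h1 : f⁻¹ (f v + f x + f x) = x + x + v := by
      apply hfi; rw [hkey]; abel
    rw [h1]; abel
  -- conjugation formula, under the automorphism hypothesis
  have hconj : (∀ x y z : X, μ x (op y z) = op (μ x y) (μ x z)) →
      ∀ a b w : X, μ a (μ b (μ a w)) = μ (μ a b) w := by
    intro A2 a b w
    rw [hA b (μ a w), hμadd]
    have h1 : f⁻¹ (f (μ a w) - f b) = op (μ a w) (-b) := by
      apply hfi; rw [hfop, hfn]; abel
    rw [h1, A2 a (μ a w) (-b), h_i1, hneg, hA (μ a b) w]
    have h2 : op w (-(μ a b)) = f⁻¹ (f w - f (μ a b)) := by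
      symm; apply hfi; rw [hfop, hfn]; abel
    rw [h2]
  -- (ii) forward
  have part2a : (∀ x y z : X, μ x (μ y z) = μ (x + y) z) →
      ∀ x y z : X, μ x (op y z) = op (μ x y) (μ x z) := by
    intro H x y z
    rw [← hB y z, hμadd x (μ y z) y, H x y z, ← hB (μ x y) (μ x z)]
    congr 1
    calc μ (x + y) z = μ x (μ y z) := (H x y z).symm
      _ = μ (op x y) z := h_i3 x y z
      _ = μ (μ x y + x) z := by rw [hB]
      _ = μ (μ x y) (μ x z) := (H (μ x y) x z).symm
  -- (ii) backward
  have part2b : (∀ x y z : X, μ x (op y z) = op (μ x y) (μ x z)) →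
      ∀ x y z : X, μ x (μ y z) = μ (x + y) z := by
    intro A2 x y z
    have hc := hconj A2
    calc μ x (μ y z) = μ x (μ y (μ x (μ x z))) := by rw [h_i1 x z]
      _ = μ x (μ (op y x) (μ x z)) := by rw [h_i3 y x]
      _ = μ (μ x (op y x)) z := hc x (op y x) z
      _ = μ (x + y) z := by rw [hd]
  refine ⟨⟨h_i1, h_i2, h_i3⟩, ⟨part2a, part2b⟩, ?_⟩
  -- (iii)
  intro H x y z
  have A2 := part2a H
  have hc := hconj A2
  have hcomm : ∀ a b w : X, μ a (μ b w) = μ b (μ a w) := by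
    intro a b w; rw [h_i3, h_i3, hopcomm]
  calc μ (μ y x - x) z = μ (μ y x + -x) z := by rw [sub_eq_add_neg]
    _ = μ (μ y x) (μ (-x) z) := (H (μ y x) (-x) z).symm
    _ = μ (μ y x) (μ x z) := by rw [h_i2]
    _ = μ y (μ x (μ y (μ x z))) := (hc y x (μ x z)).symm
    _ = μ y (μ y (μ x (μ x z))) := by rw [hcomm x y]
    _ = z := by rw [h_i1, h_i1]
end

section
/- Let (X,+) be an abelian group and f a semiautomorphism of (X,+) such that for every x ∈ X the map μ_x : X → X, μ_x(z) = f⁻¹(f(z)+f(x))−x, is additive. Define x⊕y = f⁻¹(f(x)+f(y)). Assume moreover that −f³(x) + f(f²(x) + f⁻¹(z)) = f⁻¹(f(z−x)+f(x)) for all x,z ∈ X. Then f⁻¹(μ_x(f(z))) = μ_{f²(x)}(z) for all x,z ∈ X, and each μ_x is an automorphism of (X,⊕), i.e. μ_x(y⊕z) = μ_x(y) ⊕ μ_x(z) for all x,y,z ∈ X. -/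
theorem stmt_16 {X : Type*} [AddCommGroup X] (f : Equiv.Perm X)
    (hf0 : f 0 = 0)
    (hf : ∀ x y : X, f (x + y + x) = f x + f y + f x)
    (μ : X → X → X)
    (hμ : ∀ x z : X, μ x z = f⁻¹ (f z + f x) - x)
    (hμadd : ∀ x a b : X, μ x (a + b) = μ x a + μ x b)
    (op : X → X → X)
    (hop : ∀ x y : X, op x y = f⁻¹ (f x + f y))
    (hextra : ∀ x z : X,
      -(f (f (f x))) + f (f (f x) + f⁻¹ z) = f⁻¹ (f (z - x) + f x)) :
    (∀ x z : X, f⁻¹ (μ x (f z)) = μ (f (f x)) z) ∧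
    (∀ x y z : X, μ x (op y z) = op (μ x y) (μ x z)) := by
  have hodd : ∀ x : X, f (-x) = - f x := by
    intro x
    have h := hf (-x) x
    rw [show (-x + x + -x) = -x by abel] at h
    have h2 : f (-x) + 0 = f (-x) + (f x + f (-x)) := by
      rw [add_zero, ← add_assoc]; exact h
    exact (neg_eq_of_add_eq_zero_right (add_left_cancel h2).symm).symm
  have claim1 : ∀ x z : X, f⁻¹ (μ x (f z)) = μ (f (f x)) z := by
    intro x z
    set A : X := f⁻¹ (f z + f (f (f x))) with hA
    set T : X := f⁻¹ (f (f z) + f x) - x with hT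
    -- hextra with z := f (A - f (f x))
    have hE := hextra x (f (A - f (f x)))
    rw [(show ∀ y, f⁻¹ (f y) = y from f.symm_apply_apply)] at hE
    rw [show f (f x) + (A - f (f x)) = A by abel] at hE
    rw [hA, (show ∀ y, f (f⁻¹ y) = y from f.apply_symm_apply)] at hE
    rw [show -f (f (f x)) + (f z + f (f (f x))) = f z by abel] at hE
    -- hE : f z = f⁻¹ (f (f (A - f (f x)) - x) + f x)
    have hE2 : f (f z) = f (f (A - f (f x)) - x) + f x := by
      rw [hE, (show ∀ y, f (f⁻¹ y) = y from f.apply_symm_apply)]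
    -- compute f (T - x)
    have hTx : f (T - x) = f (f z) - f x := by
      have h := hf (-x) (f⁻¹ (f (f z) + f x))
      rw [hodd, (show ∀ y, f (f⁻¹ y) = y from f.apply_symm_apply)] at h
      rw [show T - x = -x + f⁻¹ (f (f z) + f x) + -x from by rw [hT]; abel, h]
      abel
    have hinj : f (T - x) = f (f (A - f (f x)) - x) := by
      rw [hTx, hE2]; abel
    have h5 : T = f (A - f (f x)) := by have h6 := f.injective hinj; exact sub_left_injective h6
    rw [hμ, hμ, ← hT, ← hA, h5, (show ∀ y, f⁻¹ (f y) = y from f.symm_apply_apply)]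
  refine ⟨claim1, ?_⟩
  intro x y z
  have key : ∀ w : X, μ x w = f⁻¹ (μ (f⁻¹ (f⁻¹ x)) (f w)) := by
    intro w
    have h := claim1 (f⁻¹ (f⁻¹ x)) w
    rw [(show ∀ y, f (f⁻¹ y) = y from f.apply_symm_apply), (show ∀ y, f (f⁻¹ y) = y from f.apply_symm_apply)] at h
    exact h.symm
  rw [key (op y z), key y, key z, hop, hop, (show ∀ y, f (f⁻¹ y) = y from f.apply_symm_apply),
    (show ∀ y, f (f⁻¹ y) = y from f.apply_symm_apply), (show ∀ y, f (f⁻¹ y) = y from f.apply_symm_apply), ← hμadd]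
end

section
/- Let (f,β) be a Moufang pair on an abelian group (X,+). Then for all x,y ∈ X and all integers i,j: β(f^i(x), f^i(y)) = f^i(β(f^{3i}(x), y)) and β(f^{3i}(x), f^{3j}(y)) = f^{−3(i+j)}(β(x,y)), where f^k denotes the k-th iterate of the bijection f (negative iterates via the inverse bijection). -/
theorem stmt_17 {X : Type*} [AddCommGroup X] (f : Equiv.Perm X) (β : X → X → X)
    (hβ : ∀ x y : X, β x y = f⁻¹ (f x + f y) - x - y)
    (halt : ∀ x : X, β x x = 0)
    (haddl : ∀ x y z : X, β (x + y) z = β x z + β y z)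
    (haddr : ∀ x y z : X, β x (y + z) = β x y + β x z)
    (hP2 : ∀ x y z : X, β (β x y) z = 0)
    (hP3 : ∀ x y : X, β (f x) (f y) = f (β (f (f (f x))) y))
    (i j : ℤ) (x y : X) :
    β ((f ^ i) x) ((f ^ i) y) = (f ^ i) (β ((f ^ (3 * i)) x) y) ∧
    β ((f ^ (3 * i)) x) ((f ^ (3 * j)) y) = (f ^ (-(3 * (i + j)))) (β x y) := by
  have happ : ∀ z : X, f (f⁻¹ z) = z := fun z => Equiv.apply_symm_apply f z
  -- β a 0 = 0
  have hβr0 : ∀ a : X, β a 0 = 0 := by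
    intro a
    have h := haddr a 0 0
    rw [add_zero] at h
    exact left_eq_add.mp h
  -- β a (-b) = -β a b
  have hβrneg : ∀ a b : X, β a (-b) = -(β a b) := by
    intro a b
    have h := haddr a b (-b)
    rw [add_neg_cancel, hβr0] at h
    exact eq_neg_of_add_eq_zero_right h.symm
  -- key reformulation of hβ
  have hL3 : ∀ a b : X, f (a + b + β a b) = f a + f b := by
    intro a b
    have h : a + b + β a b = f⁻¹ (f a + f b) := by rw [hβ]; abel
    rw [h, happ]
  -- f 0 = 0
  have hf0 : f 0 = 0 := by
    have h := hL3 0 0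
    rw [halt, add_zero, add_zero] at h
    exact left_eq_add.mp h
  -- f is odd
  have hfneg : ∀ z : X, f (-z) = -(f z) := by
    intro z
    have h := hL3 z (-z)
    rw [hβrneg, halt, neg_zero, add_zero, add_neg_cancel, hf0] at h
    exact eq_neg_of_add_eq_zero_right h.symm
  -- antisymmetry
  have hanti : ∀ a b : X, β a b = -(β b a) := by
    intro a b
    have h := halt (a + b)
    rw [haddl, haddr, haddr, halt, halt, zero_add, add_zero] at h
    exact eq_neg_of_add_eq_zero_left h
  -- (A) : β (f³ a) b = β a (f³ b)
  have hA : ∀ a b : X, β (f (f (f a))) b = β a (f (f (f b))) := by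
    intro a b
    apply f.injective
    rw [← hP3, hanti a (f (f (f b))), hfneg, ← hP3, ← hanti (f a) (f b)]
  -- shifted P3 identities
  have s2 : ∀ a b : X, β (f⁻¹ a) (f (f b)) = f (β (f a) (f b)) := by
    intro a b
    have h := hP3 (f⁻¹ (f⁻¹ a)) (f b)
    rw [happ, happ] at h
    exact h
  have s3 : ∀ a b : X, β (f⁻¹ (f⁻¹ (f⁻¹ a))) (f (f (f b))) = f (β (f⁻¹ a) (f (f b))) := by
    intro a b
    have h := hP3 (f⁻¹ (f⁻¹ (f⁻¹ (f⁻¹ a)))) (f (f b))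
    rw [happ, happ, happ] at h
    exact h
  have hA' : ∀ a b : X, β (f⁻¹ (f⁻¹ (f⁻¹ a))) (f (f (f b))) = β a b := by
    intro a b
    have h := hA (f⁻¹ (f⁻¹ (f⁻¹ a))) b
    rw [happ, happ, happ] at h
    exact h.symm
  -- (B) : f³ (β (f³ a) b) = β a b
  have hB : ∀ a b : X, f (f (f (β (f (f (f a))) b))) = β a b := by
    intro a b
    calc f (f (f (β (f (f (f a))) b))) = f (f (β (f a) (f b))) := by rw [← hP3]
      _ = f (β (f⁻¹ a) (f (f b))) := by rw [← s2]
      _ = β (f⁻¹ (f⁻¹ (f⁻¹ a))) (f (f (f b))) := (s3 a b).symm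
      _ = β a b := hA' a b
  -- bridging lemmas for zpow
  have hFadd : ∀ (k l : ℤ) (a : X), (f ^ (k + l)) a = (f ^ k) ((f ^ l) a) := by
    intro k l a
    rw [zpow_add, Equiv.Perm.mul_apply]
  have hp3 : ∀ a : X, (f ^ (3:ℤ)) a = f (f (f a)) := by
    intro a
    show (f ^ ((3:ℕ):ℤ)) a = _
    rw [zpow_natCast]
    simp [pow_succ, Equiv.Perm.mul_apply]
  have hpn3 : ∀ a : X, (f ^ (-3:ℤ)) a = f⁻¹ (f⁻¹ (f⁻¹ a)) := by
    intro a
    have h : (-3:ℤ) = -1 + (-1) + -1 := by norm_num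
    rw [h, zpow_add, zpow_add, Equiv.Perm.mul_apply, Equiv.Perm.mul_apply, zpow_neg_one]
  -- (B) in zpow form
  have hB3 : ∀ a b : X, β ((f ^ (3:ℤ)) a) b = (f ^ (-3:ℤ)) (β a b) := by
    intro a b
    rw [hp3, hpn3]
    apply f.injective; rw [happ]
    apply f.injective; rw [happ]
    apply f.injective; rw [happ]
    exact hB a b
  -- inverse form
  have hBn3 : ∀ a b : X, β ((f ^ (-3:ℤ)) a) b = (f ^ (3:ℤ)) (β a b) := by
    intro a b
    have h := hB3 ((f ^ (-3:ℤ)) a) b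
    have e : (f ^ (3:ℤ)) ((f ^ (-3:ℤ)) a) = a := by
      rw [← hFadd]; norm_num
    rw [e] at h
    rw [h, ← hFadd]
    norm_num
  -- hC3
  have hC3 : ∀ (k : ℤ), ∀ a b : X, β ((f ^ (3 * k)) a) b = (f ^ (-(3 * k))) (β a b) := by
    intro k
    induction k using Int.induction_on with
    | zero => intro a b; norm_num
    | succ n ih =>
      intro a b
      have e1 : (3 : ℤ) * ((n:ℤ) + 1) = 3 + 3 * (n:ℤ) := by ring
      have e2 : (-(3 * ((n:ℤ) + 1))) = -3 + -(3 * (n:ℤ)) := by ring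
      rw [e2, e1, hFadd, hFadd, hB3, ih]
    | pred n ih =>
      intro a b
      have e1 : (3 : ℤ) * (-(n:ℤ) - 1) = -3 + 3 * (-(n:ℤ)) := by ring
      have e2 : (-(3 * (-(n:ℤ) - 1))) = 3 + -(3 * (-(n:ℤ))) := by ring
      rw [e2, e1, hFadd, hFadd, hBn3, ih]
  -- β (f a) (f b) = f^(-2) (β a b)
  have hC1 : ∀ a b : X, β ((f ^ (1:ℤ)) a) ((f ^ (1:ℤ)) b) = (f ^ (-2:ℤ)) (β a b) := by
    intro a b
    simp only [zpow_one]
    rw [hP3]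
    have h := hB3 a b
    rw [hp3] at h
    rw [h]
    have e : (-2:ℤ) = 1 + -3 := by norm_num
    rw [e, hFadd, zpow_one]
  have hCn1 : ∀ a b : X, β ((f ^ (-1:ℤ)) a) ((f ^ (-1:ℤ)) b) = (f ^ (2:ℤ)) (β a b) := by
    intro a b
    have h := hC1 ((f ^ (-1:ℤ)) a) ((f ^ (-1:ℤ)) b)
    have e : ∀ z : X, (f ^ (1:ℤ)) ((f ^ (-1:ℤ)) z) = z := by
      intro z; rw [← hFadd]; norm_num
    rw [e, e] at h
    rw [h, ← hFadd]
    norm_num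
  -- hD
  have hD : ∀ (k : ℤ), ∀ a b : X, β ((f ^ k) a) ((f ^ k) b) = (f ^ (-2 * k)) (β a b) := by
    intro k
    induction k using Int.induction_on with
    | zero => intro a b; norm_num
    | succ n ih =>
      intro a b
      have e1 : ((n:ℤ) + 1) = 1 + (n:ℤ) := by ring
      have e2 : (-2 * ((n:ℤ) + 1)) = -2 + -2 * (n:ℤ) := by ring
      rw [e2, e1, hFadd, hFadd, hFadd, hC1, ih]
    | pred n ih =>
      intro a b
      have e1 : (-(n:ℤ) - 1) = -1 + -(n:ℤ) := by ring
      have e2 : (-2 * (-(n:ℤ) - 1)) = 2 + -2 * (-(n:ℤ)) := by ring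
      rw [e2, e1, hFadd, hFadd, hFadd, hCn1, ih]
  -- zpow odd
  have hinvneg : ∀ z : X, f⁻¹ (-z) = -(f⁻¹ z) := by
    intro z
    apply f.injective
    rw [happ, hfneg, happ]
  have hoddf : ∀ (k : ℤ) (z : X), (f ^ k) (-z) = -((f ^ k) z) := by
    intro k
    induction k using Int.induction_on with
    | zero => intro z; norm_num
    | succ n ih =>
      intro z
      have e1 : ((n:ℤ) + 1) = 1 + (n:ℤ) := by ring
      rw [e1, hFadd, hFadd, ih, zpow_one, hfneg]
    | pred n ih =>
      intro z
      have e1 : (-(n:ℤ) - 1) = -1 + -(n:ℤ) := by ring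
      rw [e1, hFadd, hFadd, ih, zpow_neg_one, hinvneg]
  constructor
  · rw [hD i x y, hC3 i x y, ← hFadd, show i + -(3*i) = -2*i from by ring]
  · rw [hC3 i x ((f ^ (3 * j)) y), hanti x ((f ^ (3 * j)) y), hC3 j y x, hanti y x,
      hoddf (-(3*j)) (β x y), neg_neg, ← hFadd,
      show -(3*i) + -(3*j) = -(3*(i+j)) from by ring]
end

section
/- Let (f,β) be a Moufang pair on an abelian group (X,+). Then for every integer i and all x,y ∈ X, f^{−i}(f^i(x)+f^i(y)) = x + y + ∑_{k∈I(0,i)} f^{−3k}(β(x,y)). -/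
set_option linter.unusedSectionVars false

section Aux

variable {X : Type*} [AddCommGroup X] (f : Equiv.Perm X) (β : X → X → X)

lemma hcomp (m k : ℤ) (z : X) : (f ^ m) ((f ^ k) z) = (f ^ (m + k)) z := by
  rw [zpow_add]; rfl

lemma happ1 (z : X) : f z = (f ^ (1 : ℤ)) z := by rw [zpow_one]

lemma happinv (z : X) : f⁻¹ z = (f ^ (-1 : ℤ)) z := by rw [zpow_neg_one]

lemma zpow_succ_apply (n : ℤ) (z : X) : (f ^ (n + 1)) z = f ((f ^ n) z) := by
  rw [show n + 1 = 1 + n by ring, zpow_add, zpow_one]; rfl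

lemma zpow_pred_apply (n : ℤ) (z : X) : (f ^ (n - 1)) z = f⁻¹ ((f ^ n) z) := by
  rw [show n - 1 = -1 + n by ring, zpow_add, zpow_neg_one]; rfl

lemma zpow_succ_apply' (n : ℤ) (z : X) : (f ^ (n + 1)) z = (f ^ n) (f z) := by
  rw [zpow_add, zpow_one]; rfl

lemma zpow_pred_apply' (n : ℤ) (z : X) : (f ^ (n - 1)) z = (f ^ n) (f⁻¹ z) := by
  rw [zpow_sub, zpow_one]; rfl

variable (hβ : ∀ x y : X, β x y = f⁻¹ (f x + f y) - x - y)
variable (halt : ∀ x : X, β x x = 0)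
variable (haddl : ∀ x y z : X, β (x + y) z = β x z + β y z)
variable (haddr : ∀ x y z : X, β x (y + z) = β x y + β x z)
variable (hP2 : ∀ x y z : X, β (β x y) z = 0)
variable (hP3 : ∀ x y : X, β (f x) (f y) = f (β (f (f (f x))) y))

include hβ in
lemma hsymm (x y : X) : β x y = β y x := by
  rw [hβ, hβ, add_comm (f x) (f y)]; abel

include hβ halt haddl haddr in
lemma hneg (x y : X) : -β x y = β x y := by
  have h := halt (x + y)
  rw [haddl, haddr, haddr, halt, halt, hsymm f β hβ y x] at h
  have h2 : β x y + β x y = 0 := by rw [← h]; abel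
  exact neg_eq_of_add_eq_zero_left h2

include hβ halt in
lemma fzero : f 0 = 0 := by
  have h := hβ 0 0
  rw [halt] at h
  have h2 : f⁻¹ (f 0 + f 0) = 0 := by simpa using h.symm
  have h3 := congrArg f h2
  rw [Equiv.Perm.apply_inv_self] at h3
  have h4 : f 0 + f 0 = f 0 + 0 := by rw [h3, add_zero]
  exact add_left_cancel h4


include hβ in
lemma fsum (p q : X) : f p + f q = f (p + q + β p q) := by
  have h := hβ p q
  have h2 : p + q + β p q = f⁻¹ (f p + f q) := by rw [h]; abel
  rw [h2, Equiv.Perm.apply_inv_self]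

include hβ hP2 in
lemma fadd (a u v : X) : f (a + β u v) = f a + f (β u v) := by
  have h := fsum f β hβ a (β u v)
  rw [hsymm f β hβ a (β u v), hP2, add_zero] at h
  exact h.symm

include hP3 in
lemma f_beta (u v : X) : f (β u v) = β (f⁻¹ (f⁻¹ u)) (f v) := by
  have h := hP3 (f⁻¹ (f⁻¹ (f⁻¹ u))) v
  simp only [Equiv.Perm.apply_inv_self] at h
  exact h.symm

include hP3 in
lemma finv_beta (u v : X) : f⁻¹ (β u v) = β (f (f u)) (f⁻¹ v) := by
  have h := hP3 (f⁻¹ u) (f⁻¹ v)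
  simp only [Equiv.Perm.apply_inv_self] at h
  rw [h, Equiv.Perm.inv_apply_self]

include hβ hP2 hP3 in
lemma finv_add (a u v : X) : f⁻¹ (a + β u v) = f⁻¹ a + f⁻¹ (β u v) := by
  apply f.injective
  rw [Equiv.Perm.apply_inv_self, finv_beta f β hP3,
    fadd f β hβ hP2, ← finv_beta f β hP3, Equiv.Perm.apply_inv_self,
    Equiv.Perm.apply_inv_self]

include hβ halt in
lemma finvzero : f⁻¹ (0 : X) = 0 := by
  have h := fzero f β hβ halt
  nth_rewrite 1 [← h]
  rw [Equiv.Perm.inv_apply_self]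

include hβ halt in
lemma fnzero (n : ℤ) : (f ^ n) (0 : X) = 0 := by
  induction n using Int.induction_on with
  | zero => simp
  | succ n ih => rw [zpow_succ_apply, ih]; exact fzero f β hβ halt
  | pred n ih => rw [zpow_pred_apply, ih]; exact finvzero f β hβ halt

include hβ hP2 hP3 in
lemma Split (n : ℤ) : ∀ u v a : X, (f ^ n) (a + β u v) = (f ^ n) a + (f ^ n) (β u v) := by
  induction n using Int.induction_on with
  | zero => intro u v a; simp
  | succ n ih =>
      intro u v a
      rw [zpow_succ_apply', zpow_succ_apply', zpow_succ_apply',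
        fadd f β hβ hP2, f_beta f β hP3, ih]
  | pred n ih =>
      intro u v a
      rw [zpow_pred_apply', zpow_pred_apply', zpow_pred_apply',
        finv_add f β hβ hP2 hP3, finv_beta f β hP3, ih]

include hβ hP3 in
lemma L1 (x y : X) : β (f (f (f x))) y = β x (f (f (f y))) := by
  have h1 := hP3 x y
  have h2 := hP3 y x
  rw [hsymm f β hβ (f x) (f y), h2] at h1
  have h3 := f.injective h1.symm
  rw [h3, hsymm f β hβ]

include hβ hP3 in
lemma c1 (x y : X) : β (f x) (f y) = f⁻¹ (f⁻¹ (β x y)) := by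
  have key : f (f (β (f x) (f y))) = β x y := by
    rw [f_beta f β hP3 (f x) (f y)]
    simp only [Equiv.Perm.inv_apply_self]
    rw [f_beta f β hP3]
    have h := L1 f β hβ hP3 (f⁻¹ (f⁻¹ (f⁻¹ x))) y
    simp only [Equiv.Perm.apply_inv_self] at h
    exact h.symm
  rw [← key]
  simp only [Equiv.Perm.inv_apply_self]

include hβ hP3 in
lemma c2 (x y : X) : β (f⁻¹ x) (f⁻¹ y) = f (f (β x y)) := by
  have h := c1 f β hβ hP3 (f⁻¹ x) (f⁻¹ y)
  simp only [Equiv.Perm.apply_inv_self] at h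
  rw [h]
  simp only [Equiv.Perm.apply_inv_self]

include hβ hP3 in
lemma Cgen (n : ℤ) : ∀ x y : X, β ((f ^ n) x) ((f ^ n) y) = (f ^ (-(2 * n))) (β x y) := by
  induction n using Int.induction_on with
  | zero => intro x y; simp
  | succ n ih =>
      intro x y
      rw [zpow_succ_apply, zpow_succ_apply, c1 f β hβ hP3, ih,
        happinv f, happinv f, hcomp, hcomp,
        show (-1 + -1 + -(2 * (n:ℤ))) = -(2 * ((n:ℤ) + 1)) by ring]
  | pred n ih =>
      intro x y
      rw [zpow_pred_apply, zpow_pred_apply,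
        c2 f β hβ hP3, ih, happ1 f, happ1 f, hcomp, hcomp,
        show (1 + 1 + -(2 * -(n:ℤ))) = -(2 * (-(n:ℤ) - 1)) by ring]


include hβ halt haddl haddr in
lemma fsum' (p q : X) : f⁻¹ p + f⁻¹ q = f⁻¹ (p + q) + β (f⁻¹ p) (f⁻¹ q) := by
  have h := hβ (f⁻¹ p) (f⁻¹ q)
  simp only [Equiv.Perm.apply_inv_self] at h
  rw [← hneg f β hβ halt haddl haddr (f⁻¹ p) (f⁻¹ q), h]
  abel

end Aux

theorem stmt_18 {X : Type*} [AddCommGroup X] (f : Equiv.Perm X) (β : X → X → X)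
    (hβ : ∀ x y : X, β x y = f⁻¹ (f x + f y) - x - y)
    (halt : ∀ x : X, β x x = 0)
    (haddl : ∀ x y z : X, β (x + y) z = β x z + β y z)
    (haddr : ∀ x y z : X, β x (y + z) = β x y + β x z)
    (hP2 : ∀ x y z : X, β (β x y) z = 0)
    (hP3 : ∀ x y : X, β (f x) (f y) = f (β (f (f (f x))) y))
    (i : ℤ) (x y : X) :
    (f ^ (-i)) ((f ^ i) x + (f ^ i) y)
      = x + y + ∑ k ∈ I 0 i, (f ^ (-(3 * k))) (β x y) := by
  induction i using Int.induction_on with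
  | zero => simp [I]
  | succ n ih =>
      have hsum : I 0 ((n:ℤ) + 1) = insert (n:ℤ) (I 0 (n:ℤ)) := by
        ext k; simp only [I, Finset.mem_Ico, Finset.mem_insert]; omega
      have hnm : (n:ℤ) ∉ I 0 (n:ℤ) := by
        simp only [I, Finset.mem_Ico]; omega
      rw [hsum, Finset.sum_insert hnm,
        zpow_succ_apply, zpow_succ_apply, fsum f β hβ,
        happ1 f ((f ^ (n:ℤ)) x + (f ^ (n:ℤ)) y + β ((f ^ (n:ℤ)) x) ((f ^ (n:ℤ)) y)),
        hcomp, show -((n:ℤ) + 1) + 1 = -(n:ℤ) by ring,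
        Split f β hβ hP2 hP3, ih, Cgen f β hβ hP3, hcomp,
        show -(n:ℤ) + -(2 * (n:ℤ)) = -(3 * (n:ℤ)) by ring]
      abel
  | pred n ih =>
      have hsum : I 0 (-(n:ℤ) - 1) = insert (-(n:ℤ) - 1) (I 0 (-(n:ℤ))) := by
        ext k; simp only [I, Finset.mem_Ico, Finset.mem_insert]; omega
      have hnm : -(n:ℤ) - 1 ∉ I 0 (-(n:ℤ)) := by
        simp only [I, Finset.mem_Ico]; omega
      rw [hsum, Finset.sum_insert hnm,
        zpow_pred_apply f (-(n:ℤ)) x, zpow_pred_apply f (-(n:ℤ)) y,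
        fsum' f β hβ halt haddl haddr,
        Split f β hβ hP2 hP3,
        happinv f ((f ^ (-(n:ℤ))) x + (f ^ (-(n:ℤ))) y),
        hcomp, show -(-(n:ℤ) - 1) + -1 = -(-(n:ℤ)) by ring,
        ih,
        ← zpow_pred_apply f (-(n:ℤ)) x, ← zpow_pred_apply f (-(n:ℤ)) y,
        Cgen f β hβ hP3, hcomp,
        show -(-(n:ℤ) - 1) + -(2 * (-(n:ℤ) - 1)) = -(3 * (-(n:ℤ) - 1)) by ring]
      abel
end

section
/- Let (f,β) be a Moufang pair on an abelian group (X,+). Then (f³, β) is a construction pair on (X,+); that is, β is symmetric, alternating and biadditive, and with g = f³ one has g⁻¹(g(x)+g(y)) = x+y+β(x,y)+g⁻¹(β(x,y))+g⁻²(β(x,y)) for all x,y ∈ X, β(β(x,y),z) = 0 for all x,y,z ∈ X, and g⁻¹(β(x,y)) = β(g(x),y) for all x,y ∈ X. -/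
theorem stmt_19 {X : Type*} [AddCommGroup X] (f : Equiv.Perm X) (β : X → X → X)
    (hβ : ∀ x y : X, β x y = f⁻¹ (f x + f y) - x - y)
    (halt : ∀ x : X, β x x = 0)
    (haddl : ∀ x y z : X, β (x + y) z = β x z + β y z)
    (haddr : ∀ x y z : X, β x (y + z) = β x y + β x z)
    (hP2 : ∀ x y z : X, β (β x y) z = 0)
    (hP3 : ∀ x y : X, β (f x) (f y) = f (β (f (f (f x))) y)) :
    IsConstructionPair (f ^ 3) β := by
  -- symmetry of β
  have hsymm : ∀ x y : X, β x y = β y x := by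
    intro x y
    rw [hβ, hβ, add_comm (f x)]
    abel
  -- the defining identity in the useful direction
  have hstar : ∀ x y : X, f (x + y + β x y) = f x + f y := by
    intro x y
    have h : x + y + β x y = f⁻¹ (f x + f y) := by rw [hβ]; abel
    rw [h, Equiv.Perm.apply_inv_self]
  have hzr : ∀ x u v : X, β x (β u v) = 0 := fun x u v =>
    (hsymm x _).trans (hP2 u v x)
  have haddβ : ∀ x u v : X, f (x + β u v) = f x + f (β u v) := by
    intro x u v
    have h := hstar x (β u v)
    rwa [hzr, add_zero] at h
  -- f pushes through β-values
  have hC : ∀ u v : X, f (β u v) = β (f⁻¹ (f⁻¹ u)) (f v) := by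
    intro u v
    have h := hP3 (f⁻¹ (f⁻¹ (f⁻¹ u))) v
    simp only [Equiv.Perm.apply_inv_self] at h
    exact h.symm
  have hA : ∀ x y : X, β (f (f (f x))) y = β x (f (f (f y))) := by
    intro x y
    apply f.injective
    rw [← hP3 x y, hsymm x (f (f (f y))), ← hP3 y x, hsymm (f x) (f y)]
  have hC3' : ∀ x y : X, f (f (f (β (f (f (f x))) y))) = β x y := by
    intro x y
    rw [← hP3 x y, hC]
    simp only [Equiv.Perm.inv_apply_self]
    rw [hC]
    have h := hA (f⁻¹ (f⁻¹ (f⁻¹ x))) y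
    simp only [Equiv.Perm.apply_inv_self] at h
    rw [← h]
  -- the key additive identity
  have key : ∀ x y : X,
      f (f (f (x + y + β x y + β (f (f (f x))) y
        + β (f (f (f (f (f (f x)))))) y)))
        = f (f (f x)) + f (f (f y)) := by
    intro x y
    have hc2' : f (β (f (f (f (f (f (f x)))))) y) = β (f (f (f (f x)))) (f y) := by
      rw [hC]
      simp only [Equiv.Perm.inv_apply_self]
    rw [haddβ, haddβ, hstar, hc2', ← hP3 x y, haddβ, hstar, ← hP3 (f x) (f y),
      hstar]
  have hg : ∀ z : X, (f ^ 3) z = f (f (f z)) := by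
    intro z
    simp [pow_succ, Equiv.Perm.mul_apply]
  have hc3 : ∀ x y : X, (f ^ 3)⁻¹ (β x y) = β ((f ^ 3) x) y := by
    intro x y
    rw [hg, ← hC3' x y, ← hg (β (f (f (f x))) y), Equiv.Perm.inv_apply_self]
  refine ⟨hsymm, halt, haddl, haddr, ?_, hP2, hc3⟩
  intro x y
  rw [hc3 x y, hc3]
  simp only [hg]
  rw [← key x y,
    ← hg (x + y + β x y + β (f (f (f x))) y + β (f (f (f (f (f (f x)))))) y),
    Equiv.Perm.inv_apply_self]
end
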